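/- T_ε is a connected subset of ℝ² if and only if |ε| ≤ (|p| − 1)² / (|p| − 2). -/

import Mathlib

noncomputable section

/-- The digit set `D_ε = {(i + δ_{ij} ε, j + δ_{ij} ε) : i, j ∈ {0, …, |p|-1}}`. -/
def Ddiag (p : ℤ) (ε : ℝ) : Set (ℝ × ℝ) :=
  {d | ∃ i j : ℤ, 0 ≤ i ∧ i ≤ |p| - 1 ∧ 0 ≤ j ∧ j ≤ |p| - 1 ∧
      d = ((i : ℝ) + (if i = j then ε else 0), (j : ℝ) + (if i = j then ε else 0))}

/-- The self-similar set `T_ε = {∑_{k=1}^∞ p^{-k} d_k : d_k ∈ D_ε}`. -/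
def Tdiag (p : ℤ) (ε : ℝ) : Set (ℝ × ℝ) :=
  {z | ∃ d : ℕ → ℝ × ℝ, (∀ k, d k ∈ Ddiag p ε) ∧
      z = ∑' k : ℕ, ((p : ℝ) ^ (k + 1))⁻¹ • d k}

namespace Stmt17


/-- the digit map -/
def dig (ε : ℝ) (q : ℤ × ℤ) : ℝ × ℝ :=
  ((q.1 : ℝ) + (if q.1 = q.2 then ε else 0), (q.2 : ℝ) + (if q.1 = q.2 then ε else 0))

def IdxSet (p : ℤ) : Set (ℤ × ℤ) :=
  {q | 0 ≤ q.1 ∧ q.1 ≤ |p| - 1 ∧ 0 ≤ q.2 ∧ q.2 ≤ |p| - 1}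

lemma idxSet_finite (p : ℤ) : (IdxSet p).Finite := by
  have : IdxSet p ⊆ (Set.Icc 0 (|p|-1)) ×ˢ (Set.Icc 0 (|p|-1)) := by
    rintro ⟨a, b⟩ ⟨h1, h2, h3, h4⟩
    exact ⟨⟨h1, h2⟩, ⟨h3, h4⟩⟩
  exact Set.Finite.subset ((Set.finite_Icc _ _).prod (Set.finite_Icc _ _)) this

instance (p : ℤ) : Finite (IdxSet p) := (idxSet_finite p).to_subtype

lemma mem_Ddiag_iff (p : ℤ) (ε : ℝ) (d : ℝ × ℝ) :
    d ∈ Ddiag p ε ↔ ∃ q : IdxSet p, d = dig ε q.1 := by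
  constructor
  · rintro ⟨i, j, h1, h2, h3, h4, rfl⟩
    exact ⟨⟨(i, j), h1, h2, h3, h4⟩, rfl⟩
  · rintro ⟨⟨⟨i, j⟩, h1, h2, h3, h4⟩, rfl⟩
    exact ⟨i, j, h1, h2, h3, h4, rfl⟩

lemma habs_cast (p : ℤ) : |(p : ℝ)| = ((|p| : ℤ) : ℝ) := by
  rw [Int.cast_abs]

lemma hN3 {p : ℤ} (hp : 2 < |p|) : (3 : ℝ) ≤ |(p : ℝ)| := by
  rw [habs_cast]; exact_mod_cast hp

lemma hp0 {p : ℤ} (hp : 2 < |p|) : (p : ℝ) ≠ 0 := by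
  have := hN3 hp
  intro h
  rw [h] at this
  norm_num at this

lemma hN1 {p : ℤ} (hp : 2 < |p|) : (1 : ℝ) < |(p : ℝ)| :=
  lt_of_lt_of_le (by norm_num) (hN3 hp)

lemma hNinv_lt {p : ℤ} (hp : 2 < |p|) : |(p : ℝ)|⁻¹ < 1 := by
  rw [inv_lt_one_iff₀]; right; exact hN1 hp

lemma hNinv_nonneg (p : ℤ) : (0:ℝ) ≤ |(p : ℝ)|⁻¹ := by positivity

/-- sign twist -/
def eta (p : ℤ) (k : ℕ) : ℝ := (if 0 < p then 1 else -1) ^ (k + 1)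

lemma eta_mul_inv_pow (p : ℤ) (hp : 2 < |p|) (k : ℕ) :
    ((p : ℝ) ^ (k + 1))⁻¹ * eta p k = (|(p : ℝ)| ^ (k + 1))⁻¹ := by
  unfold eta
  rcases lt_or_ge 0 p with h | h
  · simp [h, abs_of_pos (by exact_mod_cast h : (0:ℝ) < (p:ℝ))]
  · have hple : p < 0 := by
      rcases lt_trichotomy p 0 with h' | h' | h'
      · exact h'
      · subst h'; simp at hp
      · exact absurd h' (not_lt.mpr h)
    have hneg : (p : ℝ) < 0 := by exact_mod_cast hple
    have key : ∀ N : ℝ, (((-1) * N) ^ (k+1))⁻¹ * (-1 : ℝ) ^ (k+1) = (N ^ (k+1))⁻¹ := by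
      intro N
      rw [mul_pow, mul_inv]
      have h1 : (((-1 : ℝ) ^ (k+1))⁻¹) = (-1 : ℝ) ^ (k+1) := by
        rcases Nat.even_or_odd (k+1) with he | ho
        · rw [he.neg_one_pow]; norm_num
        · rw [ho.neg_one_pow]; norm_num
      have h2 : ((-1 : ℝ) ^ (k+1)) * ((-1 : ℝ) ^ (k+1)) = 1 := by
        rw [← pow_add]; exact Even.neg_one_pow ⟨k+1, by ring⟩
      calc ((-1:ℝ) ^ (k+1))⁻¹ * (N ^ (k+1))⁻¹ * (-1) ^ (k+1)
          = ((-1:ℝ) ^ (k+1))⁻¹ * (-1) ^ (k+1) * (N ^ (k+1))⁻¹ := by ring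
        _ = (N ^ (k+1))⁻¹ := by rw [h1, h2, one_mul]
    have hpe : (p : ℝ) = (-1) * |(p:ℝ)| := by
      rw [abs_of_neg hneg]; ring
    rw [if_neg (not_lt.mpr (le_of_lt hple))]
    conv_lhs => rw [hpe]
    exact key _

lemma eta_sq (p : ℤ) (k : ℕ) : eta p k * eta p k = 1 := by
  unfold eta
  rcases lt_or_ge 0 p with h | h
  · simp [h]
  · rw [if_neg (not_lt.mpr h), ← pow_add]
    exact Even.neg_one_pow ⟨k+1, by ring⟩

lemma eta_abs (p : ℤ) (k : ℕ) : |eta p k| = 1 := by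
  unfold eta
  rcases lt_or_ge 0 p with h | h
  · simp [h]
  · rw [if_neg (not_lt.mpr h), abs_pow]; simp



variable {p : ℤ}

lemma hN3' (hp : 2 < |p|) : (3:ℝ) ≤ |(p:ℝ)| := by exact_mod_cast hp
lemma hN1' (hp : 2 < |p|) : (1:ℝ) < |(p:ℝ)| := lt_of_lt_of_le (by norm_num) (hN3' hp)
lemma hNinv_lt' (hp : 2 < |p|) : |(p:ℝ)|⁻¹ < 1 := by
  rw [inv_lt_one_iff₀]; right; exact hN1' hp
lemma hNpos (hp : 2 < |p|) : (0:ℝ) < |(p:ℝ)| := lt_trans (by norm_num) (hN1' hp)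

lemma summable_geom_aux (hp : 2 < |p|) (C : ℝ) :
    Summable (fun k : ℕ => C * (|(p:ℝ)|⁻¹) ^ (k+1)) := by
  have h := summable_geometric_of_lt_one (by positivity) (hNinv_lt' hp)
  exact (((h.mul_left (C * |(p:ℝ)|⁻¹))).congr (fun k => by rw [pow_succ]; ring))

lemma norm_term_le {E : Type*} [NormedAddCommGroup E] [NormedSpace ℝ E]
    (w : ℕ → E) (k : ℕ) :
    ‖((p:ℝ) ^ (k+1))⁻¹ • w k‖ = (|(p:ℝ)|⁻¹)^(k+1) * ‖w k‖ := by
  rw [norm_smul, Real.norm_eq_abs, abs_inv, abs_pow, inv_pow]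

lemma summable_smul_of_bounded {E : Type*} [NormedAddCommGroup E] [NormedSpace ℝ E]
    [CompleteSpace E] (hp : 2 < |p|) {w : ℕ → E} {C : ℝ} (hC : ∀ k, ‖w k‖ ≤ C) :
    Summable (fun k => ((p:ℝ) ^ (k+1))⁻¹ • w k) := by
  apply Summable.of_norm_bounded (summable_geom_aux hp C)
  intro k
  rw [norm_term_le]
  have h0 : (0:ℝ) ≤ C := le_trans (norm_nonneg _) (hC 0)
  rw [mul_comm C]
  exact mul_le_mul_of_nonneg_left (hC k) (by positivity)

lemma hasSum_geom (hp : 2 < |p|) (a : ℝ) :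
    HasSum (fun k : ℕ => (|(p:ℝ)| ^ (k+1))⁻¹ * a) (a / (|(p:ℝ)| - 1)) := by
  have h := hasSum_geometric_of_lt_one (by positivity) (hNinv_lt' hp)
  have h2 := h.mul_right (|(p:ℝ)|⁻¹ * a)
  have hne : |(p:ℝ)| - 1 ≠ 0 := by linarith [hN1' hp]
  have hne2 : |(p:ℝ)| ≠ 0 := ne_of_gt (hNpos hp)
  have e1 : (fun k : ℕ => (|(p:ℝ)|⁻¹)^k * (|(p:ℝ)|⁻¹ * a))
      = fun k : ℕ => (|(p:ℝ)| ^ (k+1))⁻¹ * a := by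
    funext k; rw [pow_succ, mul_inv, inv_pow]; ring
  have e2 : (1 - |(p:ℝ)|⁻¹)⁻¹ * (|(p:ℝ)|⁻¹ * a) = a / (|(p:ℝ)| - 1) := by
    rw [eq_div_iff hne]
    have h3 : (1 - |(p:ℝ)|⁻¹) = (|(p:ℝ)| - 1) * |(p:ℝ)|⁻¹ := by
      field_simp
    rw [h3, mul_inv, inv_inv]
    field_simp
  rw [e2, e1] at h2
  exact h2

/-- Base-N expansion of a real in [0,1). -/
lemma expansion (hp : 2 < |p|) {x : ℝ} (hx0 : 0 ≤ x) (hx1 : x < 1) :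
    ∃ c : ℕ → ℤ, (∀ k, 0 ≤ c k ∧ c k ≤ |p| - 1) ∧
      HasSum (fun k => (|(p:ℝ)| ^ (k+1))⁻¹ * (c k : ℝ)) x := by
  set N : ℝ := |(p:ℝ)| with hNdef
  have hN0 : 0 < N := hNpos hp
  have hNcast : ((|p| : ℤ) : ℝ) = N := by rw [hNdef, Int.cast_abs]
  set c : ℕ → ℤ := fun k => ⌊N ^ (k+1) * x⌋ - |p| * ⌊N ^ k * x⌋ with hc
  have hbounds : ∀ k, 0 ≤ c k ∧ c k ≤ |p| - 1 := by
    intro k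
    have hNy : N ^ (k+1) * x = N * (N ^ k * x) := by rw [pow_succ]; ring
    constructor
    · have h : (|p| * ⌊N ^ k * x⌋ : ℤ) ≤ ⌊N * (N ^ k * x)⌋ := by
        apply Int.le_floor.mpr
        push_cast
        exact mul_le_mul_of_nonneg_left (Int.floor_le _) (le_of_lt hN0)
      rw [hc]; simp only [hNy]; omega
    · have h : ⌊N * (N ^ k * x)⌋ < |p| * ⌊N ^ k * x⌋ + |p| := by
        apply Int.floor_lt.mpr
        push_cast
        calc N * (N ^ k * x) < N * (⌊N ^ k * x⌋ + 1) :=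
              mul_lt_mul_of_pos_left (Int.lt_floor_add_one _) hN0
          _ = N * ⌊N ^ k * x⌋ + N := by ring
      rw [hc]; simp only [hNy]; omega
  refine ⟨c, hbounds, ?_⟩
  have hpartial : ∀ n : ℕ, ∑ k ∈ Finset.range n, (N ^ (k+1))⁻¹ * (c k : ℝ)
      = (⌊N ^ n * x⌋ : ℝ) / N ^ n := by
    intro n
    induction n with
    | zero => simp [Int.floor_eq_zero_iff.mpr ⟨hx0, hx1⟩]
    | succ n ih =>
      rw [Finset.sum_range_succ, ih, hc]
      push_cast
      have h1 : (N:ℝ) ^ n ≠ 0 := by positivity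
      have h2 : (N:ℝ) ^ (n+1) ≠ 0 := by positivity
      field_simp
      ring
  have hdist : ∀ n : ℕ, |(∑ k ∈ Finset.range n, (N ^ (k+1))⁻¹ * (c k : ℝ)) - x| ≤ (N⁻¹) ^ n := by
    intro n
    have hN' : (0:ℝ) < N ^ n := by positivity
    have h1 : (⌊N ^ n * x⌋ : ℝ) ≤ N ^ n * x := Int.floor_le _
    have h2 : N ^ n * x < (⌊N ^ n * x⌋ : ℝ) + 1 := Int.lt_floor_add_one _
    have hprod : (N⁻¹ : ℝ) ^ n * N ^ n = 1 := by
      rw [← mul_pow, inv_mul_cancel₀ (ne_of_gt hN0), one_pow]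
    rw [hpartial n, abs_sub_comm]
    have e : x - (⌊N ^ n * x⌋ : ℝ) / N ^ n = (N ^ n * x - ⌊N ^ n * x⌋) / N ^ n := by
      rw [sub_div, mul_comm, mul_div_assoc, div_self (ne_of_gt hN'), mul_one]
    rw [e, abs_of_nonneg (div_nonneg (by linarith) (le_of_lt hN'))]
    rw [div_le_iff₀ hN']
    linarith
  have hconv : Filter.Tendsto (fun n => ∑ k ∈ Finset.range n, (N ^ (k+1))⁻¹ * (c k : ℝ))
      Filter.atTop (nhds x) := by
    have hz : Filter.Tendsto
        (fun n => (∑ k ∈ Finset.range n, (N ^ (k+1))⁻¹ * (c k : ℝ)) - x)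
        Filter.atTop (nhds 0) := by
      apply squeeze_zero_norm hdist
      exact tendsto_pow_atTop_nhds_zero_of_lt_one (by positivity)
        (by rw [inv_lt_one_iff₀]; right; exact hN1' hp)
    have := hz.add_const x
    simpa using this
  have hsummable : Summable (fun k => (N ^ (k+1))⁻¹ * (c k : ℝ)) := by
    apply Summable.of_norm_bounded (summable_geom_aux hp (N - 1))
    intro k
    rw [Real.norm_eq_abs, abs_mul, abs_inv, abs_pow, abs_of_pos hN0, inv_pow]
    rw [mul_comm (N-1)]
    apply mul_le_mul_of_nonneg_left _ (by positivity)
    rw [abs_of_nonneg (by exact_mod_cast (hbounds k).1)]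
    have h := (hbounds k).2
    have h2 : ((c k : ℤ) : ℝ) ≤ ((|p| : ℤ) : ℝ) - 1 := by exact_mod_cast h
    rw [hNcast] at h2
    exact h2
  rw [hsummable.hasSum_iff_tendsto_nat]
  exact hconv


/-! ### The projection map and basic properties of `Tdiag` -/

def pii (p : ℤ) (w : ℕ → ℝ × ℝ) : ℝ × ℝ := ∑' k : ℕ, ((p : ℝ) ^ (k + 1))⁻¹ • w k

lemma mem_Tdiag_iff' {p : ℤ} {ε : ℝ} {z : ℝ × ℝ} :
    z ∈ Tdiag p ε ↔ ∃ d : ℕ → ℝ × ℝ, (∀ k, d k ∈ Ddiag p ε) ∧ z = pii p d := Iff.rfl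

/-- bound for digits -/
def Cd (p : ℤ) (ε : ℝ) : ℝ := |(p:ℝ)| - 1 + |ε|

lemma Cd_nonneg {p : ℤ} (hp : 2 < |p|) (ε : ℝ) : 0 ≤ Cd p ε := by
  have := hN1' (p := p) hp; unfold Cd; have := abs_nonneg ε; linarith

lemma coord_bound {p : ℤ} (hp : 2 < |p|) (ε : ℝ) {i j : ℤ} (h1 : 0 ≤ i) (h2 : i ≤ |p| - 1) :
    |(i : ℝ) + (if i = j then ε else 0)| ≤ Cd p ε := by
  have hi : |(i : ℝ)| ≤ |(p:ℝ)| - 1 := by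
    rw [abs_of_nonneg (by exact_mod_cast h1)]
    have : ((i:ℤ):ℝ) ≤ ((|p| - 1 : ℤ):ℝ) := by exact_mod_cast h2
    rw [Int.cast_sub, Int.cast_abs] at this
    simpa using this
  have hite : |(if i = j then ε else 0)| ≤ |ε| := by
    split <;> simp [abs_nonneg]
  calc |(i : ℝ) + (if i = j then ε else 0)| ≤ |(i:ℝ)| + |(if i = j then ε else 0)| := abs_add_le _ _
    _ ≤ Cd p ε := by unfold Cd; linarith

lemma norm_mem_D_le {p : ℤ} (hp : 2 < |p|) {ε : ℝ} {d : ℝ × ℝ} (hd : d ∈ Ddiag p ε) :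
    ‖d‖ ≤ Cd p ε := by
  obtain ⟨i, j, h1, h2, h3, h4, rfl⟩ := hd
  rw [Prod.norm_def]
  apply max_le
  · rw [Real.norm_eq_abs]; exact coord_bound hp ε h1 h2
  · rw [Real.norm_eq_abs]
    have := coord_bound hp ε h3 h4 (j := i)
    rcases eq_or_ne i j with h | h
    · subst h; simpa using this
    · rw [if_neg h]
      rw [if_neg (fun hh => h hh.symm)] at this
      exact this

lemma summable_of_D {p : ℤ} (hp : 2 < |p|) {ε : ℝ} {d : ℕ → ℝ × ℝ}
    (hd : ∀ k, d k ∈ Ddiag p ε) :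
    Summable (fun k => ((p : ℝ) ^ (k + 1))⁻¹ • d k) :=
  summable_smul_of_bounded hp (fun k => norm_mem_D_le hp (hd k))

lemma hasSum_pii {p : ℤ} (hp : 2 < |p|) {ε : ℝ} {d : ℕ → ℝ × ℝ}
    (hd : ∀ k, d k ∈ Ddiag p ε) :
    HasSum (fun k => ((p : ℝ) ^ (k + 1))⁻¹ • d k) (pii p d) :=
  (summable_of_D hp hd).hasSum

lemma norm_pii_le {p : ℤ} (hp : 2 < |p|) {ε : ℝ} {d : ℕ → ℝ × ℝ}
    (hd : ∀ k, d k ∈ Ddiag p ε) :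
    ‖pii p d‖ ≤ Cd p ε / (|(p:ℝ)| - 1) := by
  have hs := summable_of_D hp hd
  have hnorm : Summable (fun k => ‖((p : ℝ) ^ (k + 1))⁻¹ • d k‖) := by
    apply Summable.of_nonneg_of_le (fun k => norm_nonneg _) _ (summable_geom_aux hp (Cd p ε))
    intro k
    rw [norm_term_le]
    calc (|(p:ℝ)|⁻¹)^(k+1) * ‖d k‖ ≤ (|(p:ℝ)|⁻¹)^(k+1) * Cd p ε :=
          mul_le_mul_of_nonneg_left (norm_mem_D_le hp (hd k)) (by positivity)
      _ = Cd p ε * (|(p:ℝ)|⁻¹)^(k+1) := mul_comm _ _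
  calc ‖pii p d‖ ≤ ∑' k, ‖((p : ℝ) ^ (k + 1))⁻¹ • d k‖ := norm_tsum_le_tsum_norm hnorm
    _ ≤ ∑' k : ℕ, (|(p:ℝ)| ^ (k+1))⁻¹ * Cd p ε := by
        apply hnorm.tsum_le_tsum _ ((hasSum_geom hp (Cd p ε)).summable)
        intro k
        rw [norm_term_le, inv_pow]
        exact mul_le_mul_of_nonneg_left (norm_mem_D_le hp (hd k)) (by positivity)
    _ = Cd p ε / (|(p:ℝ)| - 1) := (hasSum_geom hp (Cd p ε)).tsum_eq

lemma Tdiag_nonempty {p : ℤ} (hp : 2 < |p|) (ε : ℝ) : (Tdiag p ε).Nonempty := by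
  have h0 : (0:ℤ) ≤ |p| - 1 := by omega
  refine ⟨pii p (fun _ => (ε, ε)), (fun _ => (ε, ε)), fun k => ?_, rfl⟩
  exact ⟨0, 0, le_refl 0, h0, le_refl 0, h0, by norm_num⟩

/-- the similarity maps -/
def fmap (p : ℤ) (d x : ℝ × ℝ) : ℝ × ℝ := ((p : ℝ))⁻¹ • (d + x)

lemma continuous_fmap (p : ℤ) (d : ℝ × ℝ) : Continuous (fmap p d) := by
  unfold fmap; fun_prop

lemma fmap_mem_Tdiag {p : ℤ} (hp : 2 < |p|) {ε : ℝ} {d0 x : ℝ × ℝ}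
    (hd : d0 ∈ Ddiag p ε) (hx : x ∈ Tdiag p ε) : fmap p d0 x ∈ Tdiag p ε := by
  obtain ⟨a, ha, rfl⟩ := hx
  set d' : ℕ → ℝ × ℝ := fun n => Nat.rec d0 (fun k _ => a k) n with hd'
  have hd'mem : ∀ k, d' k ∈ Ddiag p ε := by
    intro k; cases k with
    | zero => exact hd
    | succ k => exact ha k
  refine ⟨d', hd'mem, ?_⟩
  have hf := hasSum_pii hp ha
  have h1 : HasSum (fun k => ((p:ℝ))⁻¹ • (((p : ℝ) ^ (k + 1))⁻¹ • a k)) (((p:ℝ))⁻¹ • pii p a) :=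
    hf.const_smul _
  have h2 : (fun k => ((p:ℝ))⁻¹ • (((p : ℝ) ^ (k + 1))⁻¹ • a k))
      = fun n => ((p : ℝ) ^ (n + 1 + 1))⁻¹ • d' (n + 1) := by
    funext n
    rw [smul_smul]
    congr 1
    rw [pow_succ, mul_inv]
    ring
  rw [h2] at h1
  have h3 : HasSum (fun n => ((p : ℝ) ^ (n + 1))⁻¹ • d' n) (fmap p d0 (pii p a)) := by
    rw [← hasSum_nat_add_iff' 1] 
    convert h1 using 1
    case e'_3 => rfl
    rw [Finset.sum_range_one]
    show fmap p d0 (pii p a) - ((p:ℝ) ^ (0+1))⁻¹ • d' 0 = _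
    unfold fmap
    rw [pow_one]
    show ((p:ℝ))⁻¹ • (d0 + pii p a) - ((p:ℝ))⁻¹ • d0 = _
    rw [smul_add]
    abel
  exact h3.tsum_eq.symm

lemma exists_decomp {p : ℤ} (hp : 2 < |p|) {ε : ℝ} {z : ℝ × ℝ} (hz : z ∈ Tdiag p ε) :
    ∃ d0 ∈ Ddiag p ε, ∃ x ∈ Tdiag p ε, z = fmap p d0 x := by
  obtain ⟨a, ha, rfl⟩ := hz
  have hf := hasSum_pii hp ha
  have h2 := (hasSum_nat_add_iff' (f := fun k => ((p : ℝ) ^ (k + 1))⁻¹ • a k) 1).mpr hf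
  rw [Finset.sum_range_one] at h2
  have h3 := h2.const_smul ((p:ℝ))
  have hp0' : (p:ℝ) ≠ 0 := hp0 hp
  have h4 : (fun n => ((p:ℝ)) • (((p : ℝ) ^ (n + 1 + 1))⁻¹ • a (n + 1)))
      = fun n => ((p : ℝ) ^ (n + 1))⁻¹ • a (n + 1) := by
    funext n
    rw [smul_smul]
    congr 1
    rw [pow_succ, mul_inv]
    field_simp
  rw [h4] at h3
  set x := pii p (fun n => a (n + 1)) with hx
  have hxT : x ∈ Tdiag p ε := ⟨_, fun k => ha (k+1), rfl⟩
  have h5 : x = (p:ℝ) • (pii p a - ((p:ℝ) ^ (0+1))⁻¹ • a 0) := h3.tsum_eq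
  refine ⟨a 0, ha 0, x, hxT, ?_⟩
  rw [h5]
  have e1 : ((p:ℝ) ^ (0+1))⁻¹ = (p:ℝ)⁻¹ := by norm_num
  rw [e1]
  unfold fmap
  rw [smul_add, smul_smul, inv_mul_cancel₀ hp0', one_smul]
  show pii p a = (p:ℝ)⁻¹ • a 0 + (pii p a - (p:ℝ)⁻¹ • a 0)
  abel

/-! ### The difference set -/

def Tdiff (p : ℤ) (ε : ℝ) : Set (ℝ × ℝ) :=
  {z | ∃ x ∈ Tdiag p ε, ∃ y ∈ Tdiag p ε, z = x - y}

lemma rep_mem_Tdiff {p : ℤ} (hp : 2 < |p|) {ε : ℝ} {w : ℕ → ℝ × ℝ} {z : ℝ × ℝ}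
    (hw : ∀ k, ∃ d1 ∈ Ddiag p ε, ∃ d2 ∈ Ddiag p ε, eta p k • w k = d1 - d2)
    (hz : HasSum (fun k => (|(p : ℝ)| ^ (k + 1))⁻¹ • w k) z) : z ∈ Tdiff p ε := by
  choose a ha b hb hab using hw
  have hA := hasSum_pii hp ha
  have hB := hasSum_pii hp hb
  have hAB := hA.sub hB
  have he : (fun k => ((p : ℝ) ^ (k + 1))⁻¹ • a k - ((p : ℝ) ^ (k + 1))⁻¹ • b k)
      = fun k => (|(p : ℝ)| ^ (k + 1))⁻¹ • w k := by
    funext k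
    rw [← smul_sub, ← hab, smul_smul, ← eta_mul_inv_pow p hp k]
  rw [he] at hAB
  exact ⟨pii p a, ⟨a, ha, rfl⟩, pii p b, ⟨b, hb, rfl⟩, (hz.unique hAB)⟩

lemma Tdiff_neg {p : ℤ} {ε : ℝ} {z : ℝ × ℝ} (h : z ∈ Tdiff p ε) : -z ∈ Tdiff p ε := by
  obtain ⟨x, hx, y, hy, rfl⟩ := h
  exact ⟨y, hy, x, hx, by abel⟩


/-! ### Compactness of `Tdiag` -/

lemma isCompact_Tdiag {p : ℤ} (hp : 2 < |p|) (ε : ℝ) : IsCompact (Tdiag p ε) := by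
  have hrange : Tdiag p ε = Set.range
      (fun σ : ℕ → IdxSet p => pii p (fun k => dig ε ((σ k) : ℤ × ℤ))) := by
    ext z
    constructor
    · rintro ⟨d, hd, rfl⟩
      have hq : ∀ k, ∃ q : IdxSet p, d k = dig ε q.1 :=
        fun k => (mem_Ddiag_iff p ε (d k)).mp (hd k)
      choose σ hσ using hq
      exact ⟨σ, (congrArg (pii p) (funext hσ)).symm⟩
    · rintro ⟨σ, rfl⟩
      exact ⟨_, fun k => (mem_Ddiag_iff p ε _).mpr ⟨σ k, rfl⟩, rfl⟩
  rw [hrange]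
  apply isCompact_range
  apply continuous_tsum (u := fun k => Cd p ε * (|(p:ℝ)|⁻¹)^(k+1))
  · intro k
    exact (Continuous.comp
      (continuous_of_discreteTopology (f := fun q : IdxSet p => dig ε (q : ℤ × ℤ)))
      (continuous_apply k : Continuous fun σ : ℕ → IdxSet p => σ k)).const_smul (((p:ℝ) ^ (k + 1))⁻¹)
  · exact summable_geom_aux hp (Cd p ε)
  · intro k σ
    show ‖((p:ℝ) ^ (k + 1))⁻¹ • dig ε ((σ k) : ℤ × ℤ)‖ ≤ _
    rw [norm_term_le (w := fun k => dig ε ((σ k) : ℤ × ℤ))]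
    calc (|(p:ℝ)|⁻¹)^(k+1) * ‖dig ε ((σ k) : ℤ × ℤ)‖
        ≤ (|(p:ℝ)|⁻¹)^(k+1) * Cd p ε :=
          mul_le_mul_of_nonneg_left
            (norm_mem_D_le hp ((mem_Ddiag_iff p ε _).mpr ⟨σ k, rfl⟩)) (by positivity)
      _ = Cd p ε * (|(p:ℝ)|⁻¹)^(k+1) := mul_comm _ _

/-! ### The decreasing compact approximations -/

def RB (p : ℤ) (ε : ℝ) : ℝ := |(p:ℝ)| + |ε|

lemma RB_pos {p : ℤ} (hp : 2 < |p|) (ε : ℝ) : 0 < RB p ε := by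
  unfold RB; have := hNpos (p := p) hp; have := abs_nonneg ε; linarith

def Kset (p : ℤ) (ε : ℝ) : ℕ → Set (ℝ × ℝ)
  | 0 => Metric.closedBall 0 (RB p ε)
  | n+1 => ⋃ q : IdxSet p, fmap p (dig ε (q : ℤ × ℤ)) '' (Kset p ε n)

lemma Tdiag_subset_K0 {p : ℤ} (hp : 2 < |p|) (ε : ℝ) : Tdiag p ε ⊆ Kset p ε 0 := by
  rintro z ⟨d, hd, rfl⟩
  show pii p d ∈ Metric.closedBall 0 (RB p ε)
  rw [Metric.mem_closedBall, dist_zero_right]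
  have h1 := norm_pii_le hp hd
  have hN := hN3' (p := p) hp
  have hC := Cd_nonneg hp ε
  have h2 : Cd p ε / (|(p:ℝ)| - 1) ≤ Cd p ε := by
    apply div_le_self hC; linarith
  have h3 : Cd p ε ≤ RB p ε := by unfold Cd RB; linarith
  linarith

lemma norm_fmap_le {p : ℤ} (hp : 2 < |p|) {d x : ℝ × ℝ} :
    ‖fmap p d x‖ ≤ |(p:ℝ)|⁻¹ * (‖d‖ + ‖x‖) := by
  unfold fmap
  rw [norm_smul, Real.norm_eq_abs, abs_inv]
  exact mul_le_mul_of_nonneg_left (norm_add_le _ _) (by positivity)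

lemma fmap_K0 {p : ℤ} (hp : 2 < |p|) {ε : ℝ} {d : ℝ × ℝ} (hd : d ∈ Ddiag p ε) :
    fmap p d '' (Kset p ε 0) ⊆ Kset p ε 0 := by
  rintro _ ⟨x, hx, rfl⟩
  show fmap p d x ∈ Metric.closedBall 0 (RB p ε)
  have hx' : ‖x‖ ≤ RB p ε := by
    have := hx; rw [show Kset p ε 0 = Metric.closedBall 0 (RB p ε) from rfl,
      Metric.mem_closedBall, dist_zero_right] at this; exact this
  rw [Metric.mem_closedBall, dist_zero_right]
  have h1 := norm_fmap_le (d := d) (x := x) hp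
  have h2 := norm_mem_D_le hp hd
  have hN := hN3' (p := p) hp
  have hNpos' := hNpos (p := p) hp
  have hεn := abs_nonneg ε
  have key : ‖d‖ + ‖x‖ ≤ |(p:ℝ)| * RB p ε := by
    have : Cd p ε + RB p ε ≤ |(p:ℝ)| * RB p ε := by
      unfold Cd RB; nlinarith
    linarith
  calc ‖fmap p d x‖ ≤ |(p:ℝ)|⁻¹ * (‖d‖ + ‖x‖) := h1
    _ ≤ |(p:ℝ)|⁻¹ * (|(p:ℝ)| * RB p ε) := by
        apply mul_le_mul_of_nonneg_left key (by positivity)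
    _ = RB p ε := by field_simp

lemma Kset_succ_subset {p : ℤ} (hp : 2 < |p|) (ε : ℝ) :
    ∀ n, Kset p ε (n+1) ⊆ Kset p ε n := by
  intro n
  induction n with
  | zero =>
    apply Set.iUnion_subset
    intro q
    exact fmap_K0 hp ((mem_Ddiag_iff p ε _).mpr ⟨q, rfl⟩)
  | succ n ih =>
    show ⋃ q : IdxSet p, _ ⊆ ⋃ q : IdxSet p, _
    apply Set.iUnion_mono
    intro q
    exact Set.image_mono ih

lemma Kset_antitone {p : ℤ} (hp : 2 < |p|) (ε : ℝ) : Antitone (Kset p ε) :=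
  antitone_nat_of_succ_le (Kset_succ_subset hp ε)

lemma Tdiag_subset_Kset {p : ℤ} (hp : 2 < |p|) (ε : ℝ) :
    ∀ n, Tdiag p ε ⊆ Kset p ε n := by
  intro n
  induction n with
  | zero => exact Tdiag_subset_K0 hp ε
  | succ n ih =>
    intro z hz
    obtain ⟨d0, hd0, x, hx, rfl⟩ := exists_decomp hp hz
    obtain ⟨q, rfl⟩ := (mem_Ddiag_iff p ε d0).mp hd0
    exact Set.mem_iUnion.mpr ⟨q, ⟨x, ih hx, rfl⟩⟩

lemma isCompact_Kset {p : ℤ} (hp : 2 < |p|) (ε : ℝ) : ∀ n, IsCompact (Kset p ε n) := by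
  intro n
  induction n with
  | zero => exact isCompact_closedBall _ _
  | succ n ih =>
    exact isCompact_iUnion (fun q => ih.image (continuous_fmap p _))

lemma dist_Kset {p : ℤ} (hp : 2 < |p|) (ε : ℝ) :
    ∀ n, ∀ x ∈ Kset p ε n, ∃ t ∈ Tdiag p ε, dist x t ≤ 2 * RB p ε * (|(p:ℝ)|⁻¹)^n := by
  intro n
  induction n with
  | zero =>
    intro x hx
    obtain ⟨t, ht⟩ := Tdiag_nonempty hp ε
    refine ⟨t, ht, ?_⟩
    have h1 : ‖x‖ ≤ RB p ε := by
      rw [show Kset p ε 0 = Metric.closedBall 0 (RB p ε) from rfl,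
        Metric.mem_closedBall, dist_zero_right] at hx; exact hx
    have h2 : ‖t‖ ≤ RB p ε := by
      have := Tdiag_subset_K0 hp ε ht
      rw [show Kset p ε 0 = Metric.closedBall 0 (RB p ε) from rfl,
        Metric.mem_closedBall, dist_zero_right] at this; exact this
    rw [dist_eq_norm]
    simp only [pow_zero, mul_one]
    calc ‖x - t‖ ≤ ‖x‖ + ‖t‖ := norm_sub_le _ _
      _ ≤ 2 * RB p ε := by linarith
  | succ n ih =>
    intro x hx
    obtain ⟨q, y, hy, rfl⟩ := by
      rw [show Kset p ε (n+1) = ⋃ q : IdxSet p, fmap p (dig ε (q : ℤ × ℤ)) '' (Kset p ε n)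
        from rfl] at hx
      exact Set.mem_iUnion.mp hx |>.imp (fun q h => h)
    obtain ⟨t, ht, hdist⟩ := ih y hy
    refine ⟨fmap p (dig ε (q : ℤ × ℤ)) t,
      fmap_mem_Tdiag hp ((mem_Ddiag_iff p ε _).mpr ⟨q, rfl⟩) ht, ?_⟩
    have : dist (fmap p (dig ε (q : ℤ × ℤ)) y) (fmap p (dig ε (q : ℤ × ℤ)) t)
        = |(p:ℝ)|⁻¹ * dist y t := by
      unfold fmap
      rw [dist_eq_norm, ← smul_sub, norm_smul, Real.norm_eq_abs, abs_inv, dist_eq_norm]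
      congr 2
      abel
    rw [this, pow_succ]
    have h4 : (0:ℝ) ≤ |(p:ℝ)|⁻¹ := by positivity
    calc |(p:ℝ)|⁻¹ * dist y t ≤ |(p:ℝ)|⁻¹ * (2 * RB p ε * (|(p:ℝ)|⁻¹)^n) :=
          mul_le_mul_of_nonneg_left hdist h4
      _ = 2 * RB p ε * ((|(p:ℝ)|⁻¹)^n * |(p:ℝ)|⁻¹) := by ring

lemma iInter_Kset {p : ℤ} (hp : 2 < |p|) (ε : ℝ) :
    ⋂ n, Kset p ε n = Tdiag p ε := by
  apply Set.Subset.antisymm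
  · intro x hx
    have hclosed : IsClosed (Tdiag p ε) := (isCompact_Tdiag hp ε).isClosed
    rw [← hclosed.closure_eq]
    rw [Metric.mem_closure_iff]
    intro δ hδ
    have hu1 : |(p:ℝ)|⁻¹ < 1 := hNinv_lt' hp
    have hu0 : (0:ℝ) ≤ |(p:ℝ)|⁻¹ := by positivity
    have hR := RB_pos hp ε
    obtain ⟨n, hn⟩ := exists_pow_lt_of_lt_one (show (0:ℝ) < δ / (2 * RB p ε) by positivity) hu1
    obtain ⟨t, ht, hd⟩ := dist_Kset hp ε n x (Set.mem_iInter.mp hx n)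
    refine ⟨t, ht, lt_of_le_of_lt hd ?_⟩
    calc 2 * RB p ε * (|(p:ℝ)|⁻¹)^n < 2 * RB p ε * (δ / (2 * RB p ε)) := by
          apply mul_lt_mul_of_pos_left hn (by positivity)
      _ = δ := by field_simp
  · exact Set.subset_iInter (Tdiag_subset_Kset hp ε)





lemma eta_cases (p : ℤ) (k : ℕ) : eta p k = 1 ∨ eta p k = -1 := by
  unfold eta
  split
  · left; simp
  · rcases Nat.even_or_odd (k+1) with he | ho
    · left; exact he.neg_one_pow
    · right; exact ho.neg_one_pow

lemma smul_pair_eq_sub {c a b x1 y1 x2 y2 : ℝ} (h1 : c * a = x1 - x2) (h2 : c * b = y1 - y2) :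
    c • ((a, b) : ℝ × ℝ) = (x1, y1) - (x2, y2) := by
  rw [Prod.smul_mk, smul_eq_mul, smul_eq_mul, Prod.mk_sub_mk, h1, h2]

lemma neg_smul_pair_eq_sub {c a b x1 y1 x2 y2 : ℝ} (h1 : -(c * a) = x1 - x2)
    (h2 : -(c * b) = y1 - y2) :
    -(c • ((a, b) : ℝ × ℝ)) = (x1, y1) - (x2, y2) := by
  rw [Prod.smul_mk, smul_eq_mul, smul_eq_mul, Prod.neg_mk, Prod.mk_sub_mk, h1, h2]

lemma hasSum_vec_geom {p : ℤ} (hp : 2 < |p|) (a b : ℝ) :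
    HasSum (fun k : ℕ => (|(p:ℝ)| ^ (k+1))⁻¹ • ((a, b) : ℝ × ℝ))
      ((a / (|(p:ℝ)| - 1), b / (|(p:ℝ)| - 1)) : ℝ × ℝ) := by
  have h := (hasSum_geom hp a).prodMk (hasSum_geom hp b)
  have he : (fun k : ℕ => (|(p:ℝ)| ^ (k+1))⁻¹ • ((a, b) : ℝ × ℝ))
      = fun k : ℕ => (((|(p:ℝ)| ^ (k+1))⁻¹ * a, (|(p:ℝ)| ^ (k+1))⁻¹ * b) : ℝ × ℝ) := by
    funext k
    rw [Prod.smul_mk, smul_eq_mul, smul_eq_mul]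
  rw [he]
  exact h

lemma mem_D_pair {p : ℤ} {ε : ℝ} {i j : ℤ} (h1 : 0 ≤ i) (h2 : i ≤ |p| - 1)
    (h3 : 0 ≤ j) (h4 : j ≤ |p| - 1) :
    ((i:ℝ) + (if i = j then ε else 0), (j:ℝ) + (if i = j then ε else 0)) ∈ Ddiag p ε :=
  ⟨i, j, h1, h2, h3, h4, rfl⟩

lemma mem_D_off {p : ℤ} {ε : ℝ} {i j : ℤ} (h1 : 0 ≤ i) (h2 : i ≤ |p| - 1)
    (h3 : 0 ≤ j) (h4 : j ≤ |p| - 1) (hne : i ≠ j) :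
    ((i:ℝ), (j:ℝ)) ∈ Ddiag p ε := by
  have := mem_D_pair (ε := ε) h1 h2 h3 h4
  rw [if_neg hne] at this
  simpa using this

lemma mem_D_diag {p : ℤ} {ε : ℝ} {i : ℤ} (h1 : 0 ≤ i) (h2 : i ≤ |p| - 1) :
    ((i:ℝ) + ε, (i:ℝ) + ε) ∈ Ddiag p ε := by
  have := mem_D_pair (ε := ε) h1 h2 h1 h2
  rw [if_pos rfl] at this
  exact this

lemma mem_Tdiff_of_const {p : ℤ} (hp : 2 < |p|) {ε : ℝ} {v1 v2 : ℝ}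
    (h1 : ∃ d1 ∈ Ddiag p ε, ∃ d2 ∈ Ddiag p ε, (|(p:ℝ)| - 1) • ((v1, v2) : ℝ × ℝ) = d1 - d2)
    (h2 : ∃ d1 ∈ Ddiag p ε, ∃ d2 ∈ Ddiag p ε, -((|(p:ℝ)| - 1) • ((v1, v2) : ℝ × ℝ)) = d1 - d2) :
    ((v1, v2) : ℝ × ℝ) ∈ Tdiff p ε := by
  have hN := hN3' (p := p) hp
  apply rep_mem_Tdiff hp (w := fun _ => (|(p:ℝ)| - 1) • ((v1, v2) : ℝ × ℝ))
  · intro k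
    rcases eta_cases p k with h | h
    · rw [h, one_smul]; exact h1
    · rw [h, neg_one_smul]
      obtain ⟨d1, hd1, d2, hd2, hd⟩ := h2
      exact ⟨d1, hd1, d2, hd2, hd⟩
  · have hv : (|(p:ℝ)| - 1) • ((v1, v2) : ℝ × ℝ)
        = (((|(p:ℝ)| - 1) * v1, (|(p:ℝ)| - 1) * v2) : ℝ × ℝ) := by
      rw [Prod.smul_mk, smul_eq_mul, smul_eq_mul]
    rw [hv]
    have hne : |(p:ℝ)| - 1 ≠ 0 := by linarith
    have := hasSum_vec_geom hp ((|(p:ℝ)| - 1) * v1) ((|(p:ℝ)| - 1) * v2)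
    have e1 : (|(p:ℝ)| - 1) * v1 / (|(p:ℝ)| - 1) = v1 := by field_simp
    have e2 : (|(p:ℝ)| - 1) * v2 / (|(p:ℝ)| - 1) = v2 := by field_simp
    rw [e1, e2] at this
    exact this

/-- difference (1,1) -/
lemma R1 {p : ℤ} (hp : 2 < |p|) (ε : ℝ) : ((1:ℝ), (1:ℝ)) ∈ Tdiff p ε := by
  have hb : (0:ℤ) ≤ |p| - 1 := by omega
  apply mem_Tdiff_of_const hp
  · exact ⟨_, mem_D_diag (p := p) (ε := ε) hb (le_refl _), _,
      mem_D_diag (p := p) (ε := ε) (le_refl 0) hb,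
      smul_pair_eq_sub (by push_cast [Int.cast_abs]; ring) (by push_cast [Int.cast_abs]; ring)⟩
  · exact ⟨_, mem_D_diag (p := p) (ε := ε) (le_refl 0) hb, _,
      mem_D_diag (p := p) (ε := ε) hb (le_refl _),
      neg_smul_pair_eq_sub (by push_cast [Int.cast_abs]; ring)
        (by push_cast [Int.cast_abs]; ring)⟩

/-- difference (0,1) -/
lemma R2 {p : ℤ} (hp : 2 < |p|) (ε : ℝ) : ((0:ℝ), (1:ℝ)) ∈ Tdiff p ε := by
  have hb : (0:ℤ) ≤ |p| - 1 := by omega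
  have h1 : (1:ℤ) ≤ |p| - 1 := by omega
  have hne1 : (1:ℤ) ≠ |p| - 1 := by omega
  have hne2 : (1:ℤ) ≠ 0 := by omega
  apply mem_Tdiff_of_const hp
  · exact ⟨_, mem_D_off (p := p) (ε := ε) zero_le_one h1 hb (le_refl _) hne1, _,
      mem_D_off (p := p) (ε := ε) zero_le_one h1 (le_refl 0) hb hne2,
      smul_pair_eq_sub (by push_cast [Int.cast_abs]; ring) (by push_cast [Int.cast_abs]; ring)⟩
  · exact ⟨_, mem_D_off (p := p) (ε := ε) zero_le_one h1 (le_refl 0) hb hne2, _,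
      mem_D_off (p := p) (ε := ε) zero_le_one h1 hb (le_refl _) hne1,
      neg_smul_pair_eq_sub (by push_cast [Int.cast_abs]; ring)
        (by push_cast [Int.cast_abs]; ring)⟩

/-- difference (1,0) -/
lemma R3 {p : ℤ} (hp : 2 < |p|) (ε : ℝ) : ((1:ℝ), (0:ℝ)) ∈ Tdiff p ε := by
  have hb : (0:ℤ) ≤ |p| - 1 := by omega
  have h1 : (1:ℤ) ≤ |p| - 1 := by omega
  have hne1 : |p| - 1 ≠ (1:ℤ) := by omega
  have hne2 : (0:ℤ) ≠ 1 := by omega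
  apply mem_Tdiff_of_const hp
  · exact ⟨_, mem_D_off (p := p) (ε := ε) hb (le_refl _) zero_le_one h1 hne1, _,
      mem_D_off (p := p) (ε := ε) (le_refl 0) hb zero_le_one h1 hne2,
      smul_pair_eq_sub (by push_cast [Int.cast_abs]; ring) (by push_cast [Int.cast_abs]; ring)⟩
  · exact ⟨_, mem_D_off (p := p) (ε := ε) (le_refl 0) hb zero_le_one h1 hne2, _,
      mem_D_off (p := p) (ε := ε) hb (le_refl _) zero_le_one h1 hne1,
      neg_smul_pair_eq_sub (by push_cast [Int.cast_abs]; ring)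
        (by push_cast [Int.cast_abs]; ring)⟩

/-- difference (1,-1) -/
lemma R4 {p : ℤ} (hp : 2 < |p|) (ε : ℝ) : ((1:ℝ), (-1:ℝ)) ∈ Tdiff p ε := by
  have hb : (0:ℤ) ≤ |p| - 1 := by omega
  have hne1 : |p| - 1 ≠ (0:ℤ) := by omega
  have hne2 : (0:ℤ) ≠ |p| - 1 := by omega
  apply mem_Tdiff_of_const hp
  · exact ⟨_, mem_D_off (p := p) (ε := ε) hb (le_refl _) (le_refl 0) hb hne1, _,
      mem_D_off (p := p) (ε := ε) (le_refl 0) hb hb (le_refl _) hne2,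
      smul_pair_eq_sub (by push_cast [Int.cast_abs]; ring) (by push_cast [Int.cast_abs]; ring)⟩
  · exact ⟨_, mem_D_off (p := p) (ε := ε) (le_refl 0) hb hb (le_refl _) hne2, _,
      mem_D_off (p := p) (ε := ε) hb (le_refl _) (le_refl 0) hb hne1,
      neg_smul_pair_eq_sub (by push_cast [Int.cast_abs]; ring)
        (by push_cast [Int.cast_abs]; ring)⟩


lemma pair_eq_sub {a b x1 y1 x2 y2 : ℝ} (h1 : a = x1 - x2) (h2 : b = y1 - y2) :
    ((a, b) : ℝ × ℝ) = (x1, y1) - (x2, y2) := by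
  rw [Prod.mk_sub_mk, h1, h2]

lemma neg_pair_eq_sub {a b x1 y1 x2 y2 : ℝ} (h1 : -a = x1 - x2) (h2 : -b = y1 - y2) :
    -((a, b) : ℝ × ℝ) = (x1, y1) - (x2, y2) := by
  rw [Prod.neg_mk, Prod.mk_sub_mk, h1, h2]

/-- The bridge between a diagonal digit and an off-diagonal digit exists
when `|ε| ≤ (N-1)²/(N-2)`. -/
lemma bridge {p : ℤ} (hp : 2 < |p|) {ε : ℝ}
    (hε : |ε| ≤ (|(p:ℝ)| - 1) ^ 2 / (|(p:ℝ)| - 2)) :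
    ∃ i0 i2 j2 : ℤ, 0 ≤ i0 ∧ i0 ≤ |p| - 1 ∧ 0 ≤ i2 ∧ i2 ≤ |p| - 1 ∧ 0 ≤ j2 ∧ j2 ≤ |p| - 1 ∧
      i2 ≠ j2 ∧ ((i0:ℝ) + ε - i2, (i0:ℝ) + ε - j2) ∈ Tdiff p ε := by
  have hN : (3:ℝ) ≤ |(p:ℝ)| := hN3' hp
  have hN2 : (0:ℝ) < |(p:ℝ)| - 2 := by linarith
  have hNm1 : (0:ℝ) < |(p:ℝ)| - 1 := by linarith
  have hNm1' : |(p:ℝ)| - 1 ≠ 0 := ne_of_gt hNm1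
  set c : ℝ := ε * (|(p:ℝ)| - 2) / (|(p:ℝ)| - 1) with hcdef
  have hc : |c| ≤ |(p:ℝ)| - 1 := by
    rw [hcdef, abs_div, abs_mul, abs_of_pos hN2, abs_of_pos hNm1, div_le_iff₀ hNm1]
    calc |ε| * (|(p:ℝ)| - 2) ≤ ((|(p:ℝ)| - 1)^2 / (|(p:ℝ)| - 2)) * (|(p:ℝ)| - 2) := by
          apply mul_le_mul_of_nonneg_right hε (le_of_lt hN2)
      _ = (|(p:ℝ)| - 1) * (|(p:ℝ)| - 1) := by field_simp
  by_cases hcase : c = |(p:ℝ)| - 1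
  · -- extreme case : take i0 = 0, i2 = |p|-1, j2 = |p|-2
    have hkey : ε * (|(p:ℝ)| - 2) = (|(p:ℝ)| - 1) * (|(p:ℝ)| - 1) := by
      have h' : ε * (|(p:ℝ)| - 2) / (|(p:ℝ)| - 1) = |(p:ℝ)| - 1 := by
        rw [← hcdef]; exact hcase
      field_simp at h'
      linarith
    refine ⟨0, |p| - 1, |p| - 2, le_refl 0, by omega, by omega, by omega, by omega, by omega,
      by omega, ?_⟩
    apply rep_mem_Tdiff hp (w := fun _ => ((ε, (|(p:ℝ)| - 1) + ε) : ℝ × ℝ))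
    · intro k
      rcases eta_cases p k with h | h
      · rw [h, one_smul]
        exact ⟨_, mem_D_diag (p := p) (ε := ε) (i := |p| - 1) (by omega) (le_refl _), _,
          mem_D_off (p := p) (ε := ε) (i := |p| - 1) (j := 0) (by omega) (le_refl _)
            (le_refl 0) (by omega) (by omega),
          pair_eq_sub (by push_cast [Int.cast_abs]; ring) (by push_cast [Int.cast_abs]; ring)⟩
      · rw [h, neg_one_smul]
        exact ⟨_, mem_D_off (p := p) (ε := ε) (i := |p| - 1) (j := 0) (by omega) (le_refl _)
            (le_refl 0) (by omega) (by omega), _,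
          mem_D_diag (p := p) (ε := ε) (i := |p| - 1) (by omega) (le_refl _),
          neg_pair_eq_sub (by push_cast [Int.cast_abs]; ring)
            (by push_cast [Int.cast_abs]; ring)⟩
    · have h1 := hasSum_geom hp ε
      have h2 := hasSum_geom hp ((|(p:ℝ)| - 1) + ε)
      have e1 : ε / (|(p:ℝ)| - 1) = ((0:ℤ):ℝ) + ε - ((|p| - 1 : ℤ):ℝ) := by
        push_cast [Int.cast_abs]
        rw [div_eq_iff hNm1']
        linear_combination (-1 : ℝ) * hkey
      have e2 : ((|(p:ℝ)| - 1) + ε) / (|(p:ℝ)| - 1) = ((0:ℤ):ℝ) + ε - ((|p| - 2 : ℤ):ℝ) := by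
        push_cast [Int.cast_abs]
        rw [div_eq_iff hNm1']
        linear_combination (-1 : ℝ) * hkey
      rw [e1] at h1
      rw [e2] at h2
      have h3 := h1.prodMk h2
      have he : (fun k : ℕ => (|(p:ℝ)| ^ (k+1))⁻¹ • ((ε, (|(p:ℝ)| - 1) + ε) : ℝ × ℝ))
          = fun k : ℕ => (((|(p:ℝ)| ^ (k+1))⁻¹ * ε,
              (|(p:ℝ)| ^ (k+1))⁻¹ * ((|(p:ℝ)| - 1) + ε)) : ℝ × ℝ) := by
        funext k
        rw [Prod.smul_mk, smul_eq_mul, smul_eq_mul]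
      rw [he]
      exact h3
  · -- main case
    have hclt : c < |(p:ℝ)| - 1 := lt_of_le_of_ne (le_trans (le_abs_self c) hc) hcase
    have hcgt : -(|(p:ℝ)| - 1) ≤ c := neg_abs_le c |>.trans' (by linarith [neg_abs_le c]) |>.trans (le_refl c)
    set m : ℤ := ⌊c⌋ with hmdef
    have hm_low : -(|p| - 1) ≤ m := by
      apply Int.le_floor.mpr
      push_cast [Int.cast_abs]
      linarith [neg_abs_le c, hc]
    have hm_high : m ≤ |p| - 2 := by
      have : m < |p| - 1 := by
        apply Int.floor_lt.mpr
        push_cast [Int.cast_abs]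
        exact hclt
      omega
    set x : ℝ := Int.fract c with hxdef
    have hx0 : 0 ≤ x := Int.fract_nonneg c
    have hx1 : x < 1 := Int.fract_lt_one c
    have hxe : x = c - m := rfl
    obtain ⟨cc, hccb, hccsum⟩ := expansion hp hx0 hx1
    -- the common membership fact
    have hmem : ((ε - (m:ℝ), ε - (m:ℝ) - 1) : ℝ × ℝ) ∈ Tdiff p ε := by
      apply rep_mem_Tdiff hp
        (w := fun k => (((cc k : ℝ) + ε, (cc k : ℝ) - (|(p:ℝ)| - 1) + ε) : ℝ × ℝ))
      · intro k
        rcases eta_cases p k with h | h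
        · rw [h, one_smul]
          exact ⟨_, mem_D_diag (p := p) (ε := ε) (i := cc k) (hccb k).1 (hccb k).2, _,
            mem_D_off (p := p) (ε := ε) (i := 0) (j := |p| - 1) (le_refl 0) (by omega)
              (by omega) (le_refl _) (by omega),
            pair_eq_sub (by push_cast [Int.cast_abs]; ring)
              (by push_cast [Int.cast_abs]; ring)⟩
        · rw [h, neg_one_smul]
          exact ⟨_, mem_D_off (p := p) (ε := ε) (i := 0) (j := |p| - 1) (le_refl 0) (by omega)
              (by omega) (le_refl _) (by omega), _,
            mem_D_diag (p := p) (ε := ε) (i := cc k) (hccb k).1 (hccb k).2,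
            neg_pair_eq_sub (by push_cast [Int.cast_abs]; ring)
              (by push_cast [Int.cast_abs]; ring)⟩
      · have h1 := hccsum.add (hasSum_geom hp ε)
        have h2 := hccsum.add (hasSum_geom hp (ε - (|(p:ℝ)| - 1)))
        have e1 : x + ε / (|(p:ℝ)| - 1) = ε - (m:ℝ) := by
          rw [hxe, hcdef]
          field_simp
          ring
        have e2 : x + (ε - (|(p:ℝ)| - 1)) / (|(p:ℝ)| - 1) = ε - (m:ℝ) - 1 := by
          rw [hxe, hcdef]
          field_simp
          ring
        rw [e1] at h1
        rw [e2] at h2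
        have h3 := h1.prodMk h2
        have he : (fun k : ℕ => (|(p:ℝ)| ^ (k+1))⁻¹ •
              (((cc k : ℝ) + ε, (cc k : ℝ) - (|(p:ℝ)| - 1) + ε) : ℝ × ℝ))
            = fun k : ℕ => (((|(p:ℝ)| ^ (k+1))⁻¹ * (cc k : ℝ) + (|(p:ℝ)| ^ (k+1))⁻¹ * ε,
                (|(p:ℝ)| ^ (k+1))⁻¹ * (cc k : ℝ)
                  + (|(p:ℝ)| ^ (k+1))⁻¹ * (ε - (|(p:ℝ)| - 1))) : ℝ × ℝ) := by
          funext k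
          rw [Prod.smul_mk, smul_eq_mul, smul_eq_mul]
          rw [Prod.mk.injEq]
          constructor <;> ring
        rw [he]
        exact h3
    rcases le_or_gt m 0 with hm | hm
    · refine ⟨-m, 0, 1, by omega, by omega, le_refl 0, by omega, by omega, by omega,
        by omega, ?_⟩
      have epair : (((-m : ℤ):ℝ) + ε - ((0:ℤ):ℝ), ((-m : ℤ):ℝ) + ε - ((1:ℤ):ℝ))
          = ((ε - (m:ℝ), ε - (m:ℝ) - 1) : ℝ × ℝ) := by
        push_cast
        rw [Prod.mk.injEq]
        constructor <;> ring
      rw [epair]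
      exact hmem
    · refine ⟨0, m, m + 1, le_refl 0, by omega, by omega, by omega, by omega, by omega,
        by omega, ?_⟩
      have epair : (((0 : ℤ):ℝ) + ε - ((m : ℤ):ℝ), ((0 : ℤ):ℝ) + ε - ((m + 1 : ℤ):ℝ))
          = ((ε - (m:ℝ), ε - (m:ℝ) - 1) : ℝ × ℝ) := by
        push_cast
        rw [Prod.mk.injEq]
        constructor <;> ring
      rw [epair]
      exact hmem


lemma abs_le_of_hasSum {p : ℤ} (hp : 2 < |p|) {g : ℕ → ℝ} {S C : ℝ}
    (hg : ∀ k, |g k| ≤ C) (h : HasSum (fun k => ((p:ℝ) ^ (k+1))⁻¹ * g k) S) :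
    |S| ≤ C / (|(p:ℝ)| - 1) := by
  have hC : 0 ≤ C := le_trans (abs_nonneg _) (hg 0)
  have hterm : ∀ k : ℕ, ‖((p:ℝ) ^ (k+1))⁻¹ * g k‖ ≤ (|(p:ℝ)| ^ (k+1))⁻¹ * C := by
    intro k
    rw [Real.norm_eq_abs, abs_mul, abs_inv, abs_pow]
    exact mul_le_mul_of_nonneg_left (hg k) (by positivity)
  have hnorm : Summable (fun k => ‖((p:ℝ) ^ (k+1))⁻¹ * g k‖) := by
    apply Summable.of_nonneg_of_le (fun k => norm_nonneg _) _ (summable_geom_aux hp C)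
    intro k
    refine le_trans (hterm k) (le_of_eq ?_)
    rw [inv_pow]
    ring
  rw [← h.tsum_eq, ← Real.norm_eq_abs]
  calc ‖∑' k, ((p:ℝ) ^ (k+1))⁻¹ * g k‖ ≤ ∑' k, ‖((p:ℝ) ^ (k+1))⁻¹ * g k‖ :=
        norm_tsum_le_tsum_norm hnorm
    _ ≤ ∑' k : ℕ, (|(p:ℝ)| ^ (k+1))⁻¹ * C :=
        hnorm.tsum_le_tsum hterm (hasSum_geom hp C).summable
    _ = C / (|(p:ℝ)| - 1) := (hasSum_geom hp C).tsum_eq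

lemma diff_decomp {p : ℤ} {ε : ℝ} {d1 d2 : ℝ × ℝ} (h1 : d1 ∈ Ddiag p ε)
    (h2 : d2 ∈ Ddiag p ε) :
    ∃ m n : ℤ, ∃ s : ℝ, d1 - d2 = (((m:ℝ) + s * ε, (n:ℝ) + s * ε) : ℝ × ℝ) ∧
      |m| ≤ |p| - 1 ∧ |n| ≤ |p| - 1 ∧ |s| ≤ 1 := by
  obtain ⟨i1, j1, hi1, hi1', hj1, hj1', rfl⟩ := h1
  obtain ⟨i2, j2, hi2, hi2', hj2, hj2', rfl⟩ := h2
  refine ⟨i1 - i2, j1 - j2,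
    (if i1 = j1 then (1:ℝ) else 0) - (if i2 = j2 then (1:ℝ) else 0), ?_, ?_, ?_, ?_⟩
  · rw [Prod.mk_sub_mk, Prod.mk.injEq]
    constructor
    · push_cast
      split_ifs <;> ring
    · push_cast
      split_ifs <;> ring
  · have := abs_sub_abs_le_abs_sub i1 i2
    rw [abs_sub_le_iff]
    omega
  · rw [abs_sub_le_iff]
    omega
  · split_ifs <;> norm_num

lemma hasSum_of_memD {p : ℤ} (hp : 2 < |p|) {ε : ℝ} {d : ℕ → ℝ × ℝ}
    (hd : ∀ k, d k ∈ Ddiag p ε) :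
    HasSum (fun k => ((p : ℝ) ^ (k + 1))⁻¹ • d k)
      (∑' k : ℕ, ((p : ℝ) ^ (k + 1))⁻¹ • d k) :=
  (summable_smul_of_bounded hp (fun k => norm_mem_D_le hp (hd k))).hasSum

/-- No edge between a diagonal digit and an off-diagonal digit when `|ε|` is large. -/
lemma no_edge {p : ℤ} (hp : 2 < |p|) {ε : ℝ}
    (hε : (|(p:ℝ)| - 1) ^ 2 / (|(p:ℝ)| - 2) < |ε|)
    {i i2 j2 : ℤ} (hia : 0 ≤ i) (hib : i ≤ |p| - 1) (h2a : 0 ≤ i2) (h2b : i2 ≤ |p| - 1)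
    (h3a : 0 ≤ j2) (h3b : j2 ≤ |p| - 1) (hne : i2 ≠ j2) :
    ((i:ℝ) + ε - i2, (i:ℝ) + ε - j2) ∉ Tdiff p ε := by
  have hN : (3:ℝ) ≤ |(p:ℝ)| := hN3' hp
  have hN2 : (0:ℝ) < |(p:ℝ)| - 2 := by linarith
  have hNm1 : (0:ℝ) < |(p:ℝ)| - 1 := by linarith
  intro hmem
  obtain ⟨xx, ⟨a, ha, rfl⟩, yy, ⟨b, hb, rfl⟩, heq⟩ := hmem
  have hA := hasSum_of_memD hp ha
  have hB := hasSum_of_memD hp hb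
  have hsub0 := hA.sub hB
  have hfe : (fun k => ((p : ℝ) ^ (k + 1))⁻¹ • a k - ((p : ℝ) ^ (k + 1))⁻¹ • b k)
      = fun k => ((p : ℝ) ^ (k + 1))⁻¹ • (a k - b k) := by
    funext k
    rw [smul_sub]
  rw [hfe] at hsub0
  choose mm nn ss hrep hmb hnb hsb using fun k => diff_decomp (ha k) (hb k)
  -- coordinate sums
  have hmmb : ∀ k, |((mm k : ℤ) : ℝ)| ≤ |(p:ℝ)| - 1 := by
    intro k
    have h := hmb k
    have : ((|mm k| : ℤ) : ℝ) ≤ ((|p| - 1 : ℤ) : ℝ) := by exact_mod_cast h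
    rw [Int.cast_abs] at this
    push_cast [Int.cast_abs] at this ⊢
    exact this
  have hnnb : ∀ k, |((nn k : ℤ) : ℝ)| ≤ |(p:ℝ)| - 1 := by
    intro k
    have h := hnb k
    have : ((|nn k| : ℤ) : ℝ) ≤ ((|p| - 1 : ℤ) : ℝ) := by exact_mod_cast h
    rw [Int.cast_abs] at this
    push_cast [Int.cast_abs] at this ⊢
    exact this
  have hsm : Summable (fun k => ((p:ℝ) ^ (k+1))⁻¹ * ((mm k : ℤ) : ℝ)) := by
    have := summable_smul_of_bounded (E := ℝ) hp (w := fun k => ((mm k : ℤ) : ℝ))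
      (C := |(p:ℝ)| - 1) (fun k => by rw [Real.norm_eq_abs]; exact hmmb k)
    simpa [smul_eq_mul] using this
  have hsn : Summable (fun k => ((p:ℝ) ^ (k+1))⁻¹ * ((nn k : ℤ) : ℝ)) := by
    have := summable_smul_of_bounded (E := ℝ) hp (w := fun k => ((nn k : ℤ) : ℝ))
      (C := |(p:ℝ)| - 1) (fun k => by rw [Real.norm_eq_abs]; exact hnnb k)
    simpa [smul_eq_mul] using this
  have hss : Summable (fun k => ((p:ℝ) ^ (k+1))⁻¹ * ss k) := by
    have := summable_smul_of_bounded (E := ℝ) hp (w := ss)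
      (C := 1) (fun k => by rw [Real.norm_eq_abs]; exact hsb k)
    simpa [smul_eq_mul] using this
  set A : ℝ := ∑' k, ((p:ℝ) ^ (k+1))⁻¹ * ((mm k : ℤ) : ℝ) with hAdef
  set B : ℝ := ∑' k, ((p:ℝ) ^ (k+1))⁻¹ * ((nn k : ℤ) : ℝ) with hBdef
  set tS : ℝ := ∑' k, ((p:ℝ) ^ (k+1))⁻¹ * ss k with htSdef
  have hmA := hsm.hasSum
  have hnB := hsn.hasSum
  have hsT := hss.hasSum
  -- first coordinate
  have hfst := hsub0.mapL (ContinuousLinearMap.fst ℝ ℝ ℝ)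
  have hsnd := hsub0.mapL (ContinuousLinearMap.snd ℝ ℝ ℝ)
  have hcombA := hmA.add (hsT.mul_right ε)
  have hcombB := hnB.add (hsT.mul_right ε)
  have hfst' : HasSum (fun k => ((p:ℝ) ^ (k+1))⁻¹ * (((mm k : ℤ) : ℝ) + ss k * ε))
      ((∑' k : ℕ, ((p : ℝ) ^ (k + 1))⁻¹ • a k) - ∑' k : ℕ, ((p : ℝ) ^ (k + 1))⁻¹ • b k).1 := by
    have he : (fun k => (ContinuousLinearMap.fst ℝ ℝ ℝ) (((p : ℝ) ^ (k + 1))⁻¹ • (a k - b k)))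
        = fun k => ((p:ℝ) ^ (k+1))⁻¹ * (((mm k : ℤ) : ℝ) + ss k * ε) := by
      funext k
      rw [hrep k]
      simp [smul_eq_mul]
    rw [← he]
    exact hfst
  have hsnd' : HasSum (fun k => ((p:ℝ) ^ (k+1))⁻¹ * (((nn k : ℤ) : ℝ) + ss k * ε))
      ((∑' k : ℕ, ((p : ℝ) ^ (k + 1))⁻¹ • a k) - ∑' k : ℕ, ((p : ℝ) ^ (k + 1))⁻¹ • b k).2 := by
    have he : (fun k => (ContinuousLinearMap.snd ℝ ℝ ℝ) (((p : ℝ) ^ (k + 1))⁻¹ • (a k - b k)))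
        = fun k => ((p:ℝ) ^ (k+1))⁻¹ * (((nn k : ℤ) : ℝ) + ss k * ε) := by
      funext k
      rw [hrep k]
      simp [smul_eq_mul]
    rw [← he]
    exact hsnd
  have hcombA' : HasSum (fun k => ((p:ℝ) ^ (k+1))⁻¹ * (((mm k : ℤ) : ℝ) + ss k * ε))
      (A + tS * ε) := by
    have he : (fun k => ((p:ℝ) ^ (k+1))⁻¹ * ((mm k : ℤ) : ℝ) + (((p:ℝ) ^ (k+1))⁻¹ * ss k) * ε)
        = fun k => ((p:ℝ) ^ (k+1))⁻¹ * (((mm k : ℤ) : ℝ) + ss k * ε) := by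
      funext k; ring
    rw [← he]
    exact hcombA
  have hcombB' : HasSum (fun k => ((p:ℝ) ^ (k+1))⁻¹ * (((nn k : ℤ) : ℝ) + ss k * ε))
      (B + tS * ε) := by
    have he : (fun k => ((p:ℝ) ^ (k+1))⁻¹ * ((nn k : ℤ) : ℝ) + (((p:ℝ) ^ (k+1))⁻¹ * ss k) * ε)
        = fun k => ((p:ℝ) ^ (k+1))⁻¹ * (((nn k : ℤ) : ℝ) + ss k * ε) := by
      funext k; ring
    rw [← he]
    exact hcombB
  have heqA : (i:ℝ) + ε - i2 = A + tS * ε := by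
    have h1 := hfst'.unique hcombA'
    have h2 : ((i:ℝ) + ε - i2, (i:ℝ) + ε - j2).1
        = ((∑' k : ℕ, ((p : ℝ) ^ (k + 1))⁻¹ • a k) - ∑' k : ℕ, ((p : ℝ) ^ (k + 1))⁻¹ • b k).1 := by
      rw [← heq]
    rw [← h1]
    exact h2
  have heqB : (i:ℝ) + ε - j2 = B + tS * ε := by
    have h1 := hsnd'.unique hcombB'
    have h2 : ((i:ℝ) + ε - i2, (i:ℝ) + ε - j2).2
        = ((∑' k : ℕ, ((p : ℝ) ^ (k + 1))⁻¹ • a k) - ∑' k : ℕ, ((p : ℝ) ^ (k + 1))⁻¹ • b k).2 := by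
      rw [← heq]
    rw [← h1]
    exact h2
  -- bounds
  have hAb : |A| ≤ 1 := by
    have := abs_le_of_hasSum hp hmmb hmA
    rwa [div_self (ne_of_gt hNm1)] at this
  have hBb : |B| ≤ 1 := by
    have := abs_le_of_hasSum hp hnnb hnB
    rwa [div_self (ne_of_gt hNm1)] at this
  have htSb : |tS| ≤ 1 / (|(p:ℝ)| - 1) := abs_le_of_hasSum hp hsb hsT
  -- the contradiction
  have hu0 : ((i - i2 : ℤ) : ℝ) + ε = A + tS * ε := by push_cast; linarith
  have hv0 : ((i - j2 : ℤ) : ℝ) + ε = B + tS * ε := by push_cast; linarith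
  set u0 : ℤ := i - i2 with hu0def
  set v0 : ℤ := i - j2 with hv0def
  have hE : ε * (1 - tS) = A - (u0 : ℝ) := by linarith
  have hE2 : ε * (1 - tS) = B - (v0 : ℝ) := by linarith
  have h1mt : (|(p:ℝ)| - 2) / (|(p:ℝ)| - 1) ≤ 1 - |tS| := by
    have : 1 / (|(p:ℝ)| - 1) + (|(p:ℝ)| - 2) / (|(p:ℝ)| - 1) = 1 := by
      rw [← add_div, div_eq_one_iff_eq (ne_of_gt hNm1)]
      ring
    linarith
  have habs1mt : (|(p:ℝ)| - 2) / (|(p:ℝ)| - 1) ≤ |1 - tS| := by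
    have h1 : 1 - |tS| ≤ |1 - tS| := by
      have := abs_sub_abs_le_abs_sub (1:ℝ) tS
      simpa using this
    linarith
  have hepos : 0 ≤ (|(p:ℝ)| - 1) ^ 2 / (|(p:ℝ)| - 2) := by positivity
  have hbig : |(p:ℝ)| - 1 < |ε * (1 - tS)| := by
    rw [abs_mul]
    calc |(p:ℝ)| - 1 = ((|(p:ℝ)| - 1) ^ 2 / (|(p:ℝ)| - 2)) * ((|(p:ℝ)| - 2) / (|(p:ℝ)| - 1)) := by
          field_simp
      _ < |ε| * ((|(p:ℝ)| - 2) / (|(p:ℝ)| - 1)) := by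
          apply mul_lt_mul_of_pos_right hε (by positivity)
      _ ≤ |ε| * |1 - tS| := mul_le_mul_of_nonneg_left habs1mt (abs_nonneg _)
  have hub : |(p:ℝ)| - 2 < |((u0 : ℤ) : ℝ)| := by
    have h1 : |A - (u0:ℝ)| ≤ |A| + |((u0:ℤ):ℝ)| := abs_sub _ _
    rw [← hE] at h1
    linarith
  have hvb : |(p:ℝ)| - 2 < |((v0 : ℤ) : ℝ)| := by
    have h1 : |B - (v0:ℝ)| ≤ |B| + |((v0:ℤ):ℝ)| := abs_sub _ _
    rw [← hE2] at h1
    linarith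
  -- to integers
  have hubz : |p| - 2 < |u0| := by
    have h : ((|p| - 2 : ℤ) : ℝ) < ((|u0| : ℤ) : ℝ) := by
      push_cast [Int.cast_abs]
      exact hub
    exact_mod_cast h
  have hvbz : |p| - 2 < |v0| := by
    have h : ((|p| - 2 : ℤ) : ℝ) < ((|v0| : ℤ) : ℝ) := by
      push_cast [Int.cast_abs]
      exact hvb
    exact_mod_cast h
  have huz : u0 = |p| - 1 ∨ u0 = -(|p| - 1) := by
    rcases le_or_gt 0 u0 with h | h
    · left; rw [abs_of_nonneg h] at hubz; omega
    · right; rw [abs_of_neg h] at hubz; omega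
  have hvz : v0 = |p| - 1 ∨ v0 = -(|p| - 1) := by
    rcases le_or_gt 0 v0 with h | h
    · left; rw [abs_of_nonneg h] at hvbz; omega
    · right; rw [abs_of_neg h] at hvbz; omega
  have hneuv : u0 ≠ v0 := by omega
  have hZdiff : |u0 - v0| = 2 * (|p| - 1) := by
    rcases huz with h1 | h1 <;> rcases hvz with h2 | h2
    · exact absurd (h1.trans h2.symm) hneuv
    · rw [h1, h2, abs_of_nonneg (by omega : (0:ℤ) ≤ |p| - 1 - -(|p| - 1))]
      ring
    · rw [h1, h2, abs_of_nonpos (by omega : -(|p| - 1) - (|p| - 1) ≤ (0:ℤ))]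
      ring
    · exact absurd (h1.trans h2.symm) hneuv
  have hABdiff : A - B = ((u0 : ℤ) : ℝ) - ((v0 : ℤ) : ℝ) := by linarith
  have hcontr : ((2 * (|p| - 1) : ℤ) : ℝ) ≤ 2 := by
    rw [show ((2 * (|p| - 1) : ℤ) : ℝ) = |((u0 - v0 : ℤ) : ℝ)| by
      rw [← hZdiff, Int.cast_abs]]
    push_cast
    rw [← hABdiff] at *
    calc |A - B| ≤ |A| + |B| := abs_sub _ _
      _ ≤ 2 := by linarith
  have : ((2 * (|p| - 1) : ℤ) : ℝ) ≥ 4 := by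
    have : (4 : ℤ) ≤ 2 * (|p| - 1) := by omega
    exact_mod_cast this
  linarith


/-! ### Graph chains on digit indices -/

def RelK (p : ℤ) (ε : ℝ) (q q' : IdxSet p) : Prop :=
  dig ε (q : ℤ × ℤ) - dig ε (q' : ℤ × ℤ) ∈ Tdiff p ε

lemma RelK_symm {p : ℤ} {ε : ℝ} {q q' : IdxSet p} (h : RelK p ε q q') : RelK p ε q' q := by
  have := Tdiff_neg h
  rwa [neg_sub] at this

lemma dig_sub_offoff {ε : ℝ} {a b c d : ℤ} (h1 : a ≠ b) (h2 : c ≠ d) :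
    dig ε (a, b) - dig ε (c, d) = (((a - c : ℤ) : ℝ), ((b - d : ℤ) : ℝ)) := by
  simp only [dig, if_neg h1, if_neg h2]
  rw [Prod.mk_sub_mk, Prod.mk.injEq]
  constructor <;> (push_cast; ring)

lemma dig_sub_diagdiag {ε : ℝ} {a c : ℤ} :
    dig ε (a, a) - dig ε (c, c) = (((a - c : ℤ) : ℝ), ((a - c : ℤ) : ℝ)) := by
  simp only [dig, if_pos rfl]
  rw [Prod.mk_sub_mk, Prod.mk.injEq]
  constructor <;> (push_cast; ring)

lemma dig_sub_diagoff {ε : ℝ} {a c d : ℤ} (h2 : c ≠ d) :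
    dig ε (a, a) - dig ε (c, d) = ((a : ℝ) + ε - c, (a : ℝ) + ε - d) := by
  simp only [dig, if_pos rfl, if_neg h2]
  rw [Prod.mk_sub_mk, Prod.mk.injEq]
  constructor <;> (push_cast; ring)

lemma relK_dd {p : ℤ} (hp : 2 < |p|) {ε : ℝ} {i : ℤ} (h0 : 0 ≤ i) (h1 : i + 1 ≤ |p| - 1) :
    RelK p ε ⟨(i+1, i+1), ⟨by omega, by omega, by omega, by omega⟩⟩
      ⟨(i, i), ⟨h0, by omega, h0, by omega⟩⟩ := by
  show dig ε (i+1, i+1) - dig ε (i, i) ∈ Tdiff p ε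
  rw [dig_sub_diagdiag]
  have e : ((i + 1 - i : ℤ) : ℝ) = (1:ℝ) := by push_cast; ring
  rw [e]
  exact R1 hp ε

lemma relK_right {p : ℤ} (hp : 2 < |p|) {ε : ℝ} {i j : ℤ} (hne1 : i + 1 ≠ j) (hne2 : i ≠ j)
    (hm1 : (i+1, j) ∈ IdxSet p) (hm2 : (i, j) ∈ IdxSet p) :
    RelK p ε ⟨(i+1, j), hm1⟩ ⟨(i, j), hm2⟩ := by
  show dig ε (i+1, j) - dig ε (i, j) ∈ Tdiff p ε
  rw [dig_sub_offoff hne1 hne2]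
  have e1 : ((i + 1 - i : ℤ) : ℝ) = (1:ℝ) := by push_cast; ring
  have e2 : ((j - j : ℤ) : ℝ) = (0:ℝ) := by push_cast; ring
  rw [e1, e2]
  exact R3 hp ε

lemma relK_up {p : ℤ} (hp : 2 < |p|) {ε : ℝ} {i j : ℤ} (hne1 : i ≠ j + 1) (hne2 : i ≠ j)
    (hm1 : (i, j+1) ∈ IdxSet p) (hm2 : (i, j) ∈ IdxSet p) :
    RelK p ε ⟨(i, j+1), hm1⟩ ⟨(i, j), hm2⟩ := by
  show dig ε (i, j+1) - dig ε (i, j) ∈ Tdiff p ε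
  rw [dig_sub_offoff hne1 hne2]
  have e1 : ((i - i : ℤ) : ℝ) = (0:ℝ) := by push_cast; ring
  have e2 : ((j + 1 - j : ℤ) : ℝ) = (1:ℝ) := by push_cast; ring
  rw [e1, e2]
  exact R2 hp ε

lemma relK_cross {p : ℤ} (hp : 2 < |p|) {ε : ℝ}
    (hm1 : ((0:ℤ), (1:ℤ)) ∈ IdxSet p) (hm2 : ((1:ℤ), (0:ℤ)) ∈ IdxSet p) :
    RelK p ε ⟨(0, 1), hm1⟩ ⟨(1, 0), hm2⟩ := by
  show dig ε (0, 1) - dig ε (1, 0) ∈ Tdiff p ε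
  rw [dig_sub_offoff (by omega) (by omega)]
  have e1 : ((0 - 1 : ℤ) : ℝ) = (-1:ℝ) := by push_cast; ring
  have e2 : ((1 - 0 : ℤ) : ℝ) = (1:ℝ) := by push_cast; ring
  rw [e1, e2]
  have := Tdiff_neg (R4 hp ε)
  have e : -(((1:ℝ), (-1:ℝ)) : ℝ × ℝ) = (((-1:ℝ), (1:ℝ)) : ℝ × ℝ) := by
    rw [Prod.neg_mk]; norm_num
  rwa [e] at this


lemma int_rec_nonneg {P : ℤ → Prop} (h0 : P 0) (hstep : ∀ i : ℤ, 0 ≤ i → P i → P (i + 1)) :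
    ∀ i : ℤ, 0 ≤ i → P i := by
  intro i hi
  obtain ⟨n, rfl⟩ := Int.eq_ofNat_of_zero_le hi
  induction n with
  | zero => rw [Nat.cast_zero]; exact h0
  | succ n ih =>
    have h := hstep n (Int.natCast_nonneg n) (ih (Int.natCast_nonneg n))
    rw [Nat.cast_add, Nat.cast_one]
    exact h

lemma int_rec_one {P : ℤ → Prop} (h1 : P 1) (hstep : ∀ i : ℤ, 1 ≤ i → P i → P (i + 1)) :
    ∀ i : ℤ, 1 ≤ i → P i := by
  have := int_rec_nonneg (P := fun n => P (n + 1)) (by simpa using h1)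
    (fun i hi hp => hstep (i + 1) (by omega) hp)
  intro i hi
  have h := this (i - 1) (by omega)
  simpa using h

/-- reach the diagonal origin -/
lemma reach_diag_zero {p : ℤ} (hp : 2 < |p|) {ε : ℝ} :
    ∀ i : ℤ, 0 ≤ i → ∀ (h1 : 0 ≤ i) (h2 : i ≤ |p| - 1),
      Relation.ReflTransGen (RelK p ε) ⟨(i, i), ⟨h1, h2, h1, h2⟩⟩
        ⟨(0, 0), ⟨le_refl 0, by omega, le_refl 0, by omega⟩⟩ := by
  refine int_rec_nonneg ?_ ?_
  · intro h1 h2; exact Relation.ReflTransGen.refl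
  · intro i h0 ih h1 h2
    exact Relation.ReflTransGen.head (relK_dd hp h0 h2) (ih h0 (by omega))

/-- clear the second coordinate when below the first -/
lemma reach_clear_second {p : ℤ} (hp : 2 < |p|) {ε : ℝ} :
    ∀ j : ℤ, 0 ≤ j → ∀ i : ℤ, j < i → ∀ (hm : (i, j) ∈ IdxSet p) (hm0 : (i, 0) ∈ IdxSet p),
      Relation.ReflTransGen (RelK p ε) ⟨(i, j), hm⟩ ⟨(i, 0), hm0⟩ := by
  refine int_rec_nonneg ?_ ?_
  · intro i _ hm hm0; exact Relation.ReflTransGen.refl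
  · intro j h0 ih i hlt hm hm0
    have hm' : (i, j) ∈ IdxSet p := by
      obtain ⟨a, b, c, d⟩ := hm; exact ⟨a, b, by omega, by omega⟩
    exact Relation.ReflTransGen.head
      (relK_up hp (by omega) (by omega) hm hm') (ih i (by omega) hm' hm0)

lemma reach_first_to_one {p : ℤ} (hp : 2 < |p|) {ε : ℝ} :
    ∀ i : ℤ, 1 ≤ i → ∀ (hm : (i, 0) ∈ IdxSet p) (hm1 : ((1:ℤ), (0:ℤ)) ∈ IdxSet p),
      Relation.ReflTransGen (RelK p ε) ⟨(i, 0), hm⟩ ⟨(1, 0), hm1⟩ := by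
  refine int_rec_one ?_ ?_
  · intro hm hm1; exact Relation.ReflTransGen.refl
  · intro i h1 ih hm hm1
    have hm' : (i, (0:ℤ)) ∈ IdxSet p := by
      obtain ⟨a, b, c, d⟩ := hm; exact ⟨by omega, by omega, c, d⟩
    exact Relation.ReflTransGen.head
      (relK_right hp (by omega) (by omega) hm hm') (ih hm' hm1)

lemma reach_clear_first {p : ℤ} (hp : 2 < |p|) {ε : ℝ} :
    ∀ i : ℤ, 0 ≤ i → ∀ j : ℤ, i < j → ∀ (hm : (i, j) ∈ IdxSet p) (hm0 : ((0:ℤ), j) ∈ IdxSet p),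
      Relation.ReflTransGen (RelK p ε) ⟨(i, j), hm⟩ ⟨(0, j), hm0⟩ := by
  refine int_rec_nonneg ?_ ?_
  · intro j _ hm hm0; exact Relation.ReflTransGen.refl
  · intro i h0 ih j hlt hm hm0
    have hm' : (i, j) ∈ IdxSet p := by
      obtain ⟨a, b, c, d⟩ := hm; exact ⟨by omega, by omega, c, d⟩
    exact Relation.ReflTransGen.head
      (relK_right hp (by omega) (by omega) hm hm') (ih j (by omega) hm' hm0)

lemma reach_second_to_one {p : ℤ} (hp : 2 < |p|) {ε : ℝ} :
    ∀ j : ℤ, 1 ≤ j → ∀ (hm : ((0:ℤ), j) ∈ IdxSet p) (hm1 : ((0:ℤ), (1:ℤ)) ∈ IdxSet p),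
      Relation.ReflTransGen (RelK p ε) ⟨(0, j), hm⟩ ⟨(0, 1), hm1⟩ := by
  refine int_rec_one ?_ ?_
  · intro hm hm1; exact Relation.ReflTransGen.refl
  · intro j h1 ih hm hm1
    have hm' : ((0:ℤ), j) ∈ IdxSet p := by
      obtain ⟨a, b, c, d⟩ := hm; exact ⟨a, b, by omega, by omega⟩
    exact Relation.ReflTransGen.head
      (relK_up hp (by omega) (by omega) hm hm') (ih hm' hm1)

lemma mem_idx10 {p : ℤ} (hp : 2 < |p|) : ((1:ℤ), (0:ℤ)) ∈ IdxSet p := by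
  exact ⟨by omega, by omega, by omega, by omega⟩

/-- any off-diagonal index reaches (1,0) -/
lemma reach_off {p : ℤ} (hp : 2 < |p|) {ε : ℝ} (q : IdxSet p)
    (hoff : (q : ℤ × ℤ).1 ≠ (q : ℤ × ℤ).2) :
    Relation.ReflTransGen (RelK p ε) q ⟨(1, 0), mem_idx10 hp⟩ := by
  obtain ⟨⟨i, j⟩, hm⟩ := q
  simp only at hoff
  obtain ⟨b1, b2, b3, b4⟩ := hm
  rcases lt_or_gt_of_ne hoff with hlt | hgt
  · -- i < j : go to (0, j), then (0,1), then cross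
    have hm0j : ((0:ℤ), j) ∈ IdxSet p := ⟨by omega, by omega, b3, b4⟩
    have hm01 : ((0:ℤ), (1:ℤ)) ∈ IdxSet p := ⟨by omega, by omega, by omega, by omega⟩
    refine Relation.ReflTransGen.trans
      (reach_clear_first hp i b1 j hlt ⟨b1, b2, b3, b4⟩ hm0j) ?_
    refine Relation.ReflTransGen.trans
      (reach_second_to_one hp j (by omega) hm0j hm01) ?_
    exact Relation.ReflTransGen.single (relK_cross hp hm01 (mem_idx10 hp))
  · -- j < i : go to (i, 0), then (1,0)
    have hmi0 : (i, (0:ℤ)) ∈ IdxSet p := ⟨b1, b2, by omega, by omega⟩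
    refine Relation.ReflTransGen.trans
      (reach_clear_second hp j b3 i hgt ⟨b1, b2, b3, b4⟩ hmi0) ?_
    exact reach_first_to_one hp i (by omega) hmi0 (mem_idx10 hp)

lemma reach_all {p : ℤ} (hp : 2 < |p|) {ε : ℝ}
    (hbr : ∃ i0 i2 j2 : ℤ, 0 ≤ i0 ∧ i0 ≤ |p| - 1 ∧ 0 ≤ i2 ∧ i2 ≤ |p| - 1 ∧ 0 ≤ j2 ∧
      j2 ≤ |p| - 1 ∧ i2 ≠ j2 ∧ ((i0:ℝ) + ε - i2, (i0:ℝ) + ε - j2) ∈ Tdiff p ε) :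
    ∀ q q' : IdxSet p, Relation.ReflTransGen (RelK p ε) q q' := by
  have hsymm : Symmetric (Relation.ReflTransGen (RelK p ε)) :=
    fun _ _ h => by
      induction h with
      | refl => rfl
      | tail _ hbc ih => exact Relation.ReflTransGen.head (RelK_symm hbc) ih
  obtain ⟨i0, i2, j2, hb1, hb2, hb3, hb4, hb5, hb6, hne, hmem⟩ := hbr
  have hto10 : ∀ q : IdxSet p, Relation.ReflTransGen (RelK p ε) q ⟨(1, 0), mem_idx10 hp⟩ := by
    intro q
    by_cases hq : (q : ℤ × ℤ).1 = (q : ℤ × ℤ).2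
    · -- diagonal : reach (0,0), then (i0,i0), then bridge to (i2,j2), then off
      obtain ⟨⟨i, j⟩, hm⟩ := q
      simp only at hq
      subst hq
      obtain ⟨b1, b2, _, _⟩ := hm
      have h00 := reach_diag_zero (ε := ε) hp i b1 b1 b2
      have hi0 := reach_diag_zero (ε := ε) hp i0 hb1 hb1 hb2
      have hbridge : RelK p ε ⟨(i0, i0), ⟨hb1, hb2, hb1, hb2⟩⟩
          ⟨(i2, j2), ⟨hb3, hb4, hb5, hb6⟩⟩ := by
        show dig ε (i0, i0) - dig ε (i2, j2) ∈ Tdiff p ε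
        rw [dig_sub_diagoff hne]
        exact hmem
      refine Relation.ReflTransGen.trans h00 ?_
      refine Relation.ReflTransGen.trans (hsymm hi0) ?_
      refine Relation.ReflTransGen.trans (Relation.ReflTransGen.single hbridge) ?_
      exact reach_off hp ⟨(i2, j2), ⟨hb3, hb4, hb5, hb6⟩⟩ hne
    · exact reach_off hp q hq
  intro q q'
  exact Relation.ReflTransGen.trans (hto10 q) (hsymm (hto10 q'))

/-! ### Connectedness of the approximations -/

lemma piece_inter {p : ℤ} (hp : 2 < |p|) {ε : ℝ} (n : ℕ) {q q' : IdxSet p}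
    (h : RelK p ε q q') :
    ((fmap p (dig ε (q : ℤ × ℤ)) '' Kset p ε n)
      ∩ (fmap p (dig ε (q' : ℤ × ℤ)) '' Kset p ε n)).Nonempty := by
  obtain ⟨x, hx, y, hy, heq⟩ := h
  refine ⟨fmap p (dig ε (q : ℤ × ℤ)) y, ⟨y, Tdiag_subset_Kset hp ε n hy, rfl⟩,
    ⟨x, Tdiag_subset_Kset hp ε n hx, ?_⟩⟩
  unfold fmap
  congr 1
  have h2 : dig ε (q : ℤ × ℤ) + y = x + dig ε (q' : ℤ × ℤ) :=
    sub_eq_sub_iff_add_eq_add.mp heq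
  rw [h2]
  abel

lemma isConnected_Kset {p : ℤ} (hp : 2 < |p|) {ε : ℝ}
    (hreach : ∀ q q' : IdxSet p, Relation.ReflTransGen (RelK p ε) q q') :
    ∀ n, IsConnected (Kset p ε n) := by
  intro n
  induction n with
  | zero =>
    constructor
    · exact ⟨0, Metric.mem_closedBall_self (le_of_lt (RB_pos hp ε))⟩
    · exact (convex_closedBall (0 : ℝ × ℝ) (RB p ε)).isPreconnected
  | succ n ih =>
    haveI : Nonempty (IdxSet p) := ⟨⟨(0, 0), ⟨le_refl 0, by omega, le_refl 0, by omega⟩⟩⟩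
    show IsConnected (⋃ q : IdxSet p, fmap p (dig ε (q : ℤ × ℤ)) '' (Kset p ε n))
    apply IsConnected.iUnion_of_reflTransGen
    · intro q
      exact ih.image _ (continuous_fmap p _).continuousOn
    · intro q q'
      exact Relation.ReflTransGen.mono (fun a b hab => piece_inter hp n hab) _ _ (hreach q q')

/-! ### Connectedness of nested intersections -/

lemma isConnected_iInter_of_antitone {K : ℕ → Set (ℝ × ℝ)} (hcomp : ∀ n, IsCompact (K n))
    (hconn : ∀ n, IsConnected (K n)) (hanti : Antitone K) :
    IsConnected (⋂ n, K n) := by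
  have hne : (⋂ n, K n).Nonempty := by
    apply IsCompact.nonempty_iInter_of_directed_nonempty_isCompact_isClosed K
      hanti.directed_ge (fun n => (hconn n).nonempty) hcomp (fun n => (hcomp n).isClosed)
  refine ⟨hne, ?_⟩
  intro U V hU hV hcov hneU hneV
  by_contra hcontra
  rw [Set.not_nonempty_iff_eq_empty] at hcontra
  set C := ⋂ n, K n with hCdef
  have hCcl : IsClosed C := isClosed_iInter (fun n => (hcomp n).isClosed)
  have hCsub0 : C ⊆ K 0 := Set.iInter_subset _ 0
  set A := C \ V with hAdef
  set B := C \ U with hBdef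
  have hAcl : IsClosed A := hCcl.sdiff hV
  have hBcl : IsClosed B := hCcl.sdiff hU
  have hAcomp : IsCompact A := (hcomp 0).of_isClosed_subset hAcl
    ((Set.diff_subset).trans hCsub0)
  have hBcomp : IsCompact B := (hcomp 0).of_isClosed_subset hBcl
    ((Set.diff_subset).trans hCsub0)
  have hAne : A.Nonempty := by
    obtain ⟨x, hxC, hxU⟩ := hneU
    refine ⟨x, hxC, fun hxV => ?_⟩
    have : x ∈ C ∩ (U ∩ V) := ⟨hxC, hxU, hxV⟩
    rw [hcontra] at this
    exact this
  have hBne : B.Nonempty := by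
    obtain ⟨x, hxC, hxV⟩ := hneV
    refine ⟨x, hxC, fun hxU => ?_⟩
    have : x ∈ C ∩ (U ∩ V) := ⟨hxC, hxU, hxV⟩
    rw [hcontra] at this
    exact this
  have hdisjAB : Disjoint A B := by
    rw [Set.disjoint_left]
    rintro x ⟨hxC, hxV⟩ ⟨_, hxU⟩
    rcases hcov hxC with h | h
    · exact hxU h
    · exact hxV h
  obtain ⟨U', V', hU'o, hV'o, hAU', hBV', hUV'⟩ :=
    SeparatedNhds.of_isCompact_isCompact hAcomp hBcomp hdisjAB
  have hCsub : C ⊆ U' ∪ V' := by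
    intro x hxC
    rcases hcov hxC with h | h
    · have hxA : x ∈ A := by
        refine ⟨hxC, fun hxV => ?_⟩
        have : x ∈ C ∩ (U ∩ V) := ⟨hxC, h, hxV⟩
        rw [hcontra] at this
        exact this
      exact Or.inl (hAU' hxA)
    · have hxB : x ∈ B := by
        refine ⟨hxC, fun hxU => ?_⟩
        have : x ∈ C ∩ (U ∩ V) := ⟨hxC, hxU, h⟩
        rw [hcontra] at this
        exact this
      exact Or.inr (hBV' hxB)
  have hex : ∃ n, K n ⊆ U' ∪ V' := by
    by_contra hnex
    push_neg at hnex
    set L : ℕ → Set (ℝ × ℝ) := fun n => K n \ (U' ∪ V') with hLdef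
    have hLne : ∀ n, (L n).Nonempty := by
      intro n
      obtain ⟨x, hx1, hx2⟩ := Set.not_subset.mp (hnex n)
      exact ⟨x, hx1, hx2⟩
    have hLanti : Antitone L := fun a b hab => Set.diff_subset_diff_left (hanti hab)
    have hLcomp : ∀ n, IsCompact (L n) := fun n => (hcomp n).diff (hU'o.union hV'o)
    have hLcl : ∀ n, IsClosed (L n) := fun n => (hcomp n).isClosed.sdiff (hU'o.union hV'o)
    obtain ⟨x, hx⟩ := IsCompact.nonempty_iInter_of_directed_nonempty_isCompact_isClosed L
      hLanti.directed_ge hLne hLcomp hLcl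
    have hxC : x ∈ C := by
      apply Set.mem_iInter.mpr
      intro n
      exact (Set.mem_iInter.mp hx n).1
    exact (Set.mem_iInter.mp hx 0).2 (hCsub hxC)
  obtain ⟨n, hKn⟩ := hex
  have hCsubKn : C ⊆ K n := Set.iInter_subset _ n
  have h1 : (K n ∩ U').Nonempty := by
    obtain ⟨x, hx⟩ := hAne
    exact ⟨x, hCsubKn hx.1, hAU' hx⟩
  have h2 : (K n ∩ V').Nonempty := by
    obtain ⟨x, hx⟩ := hBne
    exact ⟨x, hCsubKn hx.1, hBV' hx⟩
  obtain ⟨z, _, hzU, hzV⟩ := (hconn n).isPreconnected U' V' hU'o hV'o hKn h1 h2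
  exact Set.disjoint_left.mp hUV' hzU hzV



/-! ### Disconnectedness when `|ε|` is large -/

lemma disconnected_of_large {p : ℤ} (hp : 2 < |p|) {ε : ℝ}
    (hε : (|(p:ℝ)| - 1) ^ 2 / (|(p:ℝ)| - 2) < |ε|) :
    ¬ IsConnected (Tdiag p ε) := by
  intro hconn
  -- diagonal and off-diagonal pieces
  haveI : Finite {q : IdxSet p // (q : ℤ × ℤ).1 = (q : ℤ × ℤ).2} :=
    Finite.of_injective (fun q => q.1) Subtype.val_injective
  haveI : Finite {q : IdxSet p // (q : ℤ × ℤ).1 ≠ (q : ℤ × ℤ).2} :=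
    Finite.of_injective (fun q => q.1) Subtype.val_injective
  set A : Set (ℝ × ℝ) := ⋃ q : {q : IdxSet p // (q : ℤ × ℤ).1 = (q : ℤ × ℤ).2},
    fmap p (dig ε ((q : IdxSet p) : ℤ × ℤ)) '' Tdiag p ε with hAdef
  set B : Set (ℝ × ℝ) := ⋃ q : {q : IdxSet p // (q : ℤ × ℤ).1 ≠ (q : ℤ × ℤ).2},
    fmap p (dig ε ((q : IdxSet p) : ℤ × ℤ)) '' Tdiag p ε with hBdef
  have hAcomp : IsCompact A :=
    isCompact_iUnion (fun q => (isCompact_Tdiag hp ε).image (continuous_fmap p _))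
  have hBcomp : IsCompact B :=
    isCompact_iUnion (fun q => (isCompact_Tdiag hp ε).image (continuous_fmap p _))
  have hAsubT : A ⊆ Tdiag p ε := by
    apply Set.iUnion_subset
    rintro q _ ⟨x, hx, rfl⟩
    exact fmap_mem_Tdiag hp ((mem_Ddiag_iff p ε _).mpr ⟨q.1, rfl⟩) hx
  have hBsubT : B ⊆ Tdiag p ε := by
    apply Set.iUnion_subset
    rintro q _ ⟨x, hx, rfl⟩
    exact fmap_mem_Tdiag hp ((mem_Ddiag_iff p ε _).mpr ⟨q.1, rfl⟩) hx
  have hTsub : Tdiag p ε ⊆ A ∪ B := by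
    intro z hz
    obtain ⟨d0, hd0, x, hx, rfl⟩ := exists_decomp hp hz
    obtain ⟨q, rfl⟩ := (mem_Ddiag_iff p ε d0).mp hd0
    by_cases hq : (q : ℤ × ℤ).1 = (q : ℤ × ℤ).2
    · exact Or.inl (Set.mem_iUnion.mpr ⟨⟨q, hq⟩, ⟨x, hx, rfl⟩⟩)
    · exact Or.inr (Set.mem_iUnion.mpr ⟨⟨q, hq⟩, ⟨x, hx, rfl⟩⟩)
  have hAne : A.Nonempty := by
    obtain ⟨t, ht⟩ := Tdiag_nonempty hp ε
    refine ⟨fmap p (dig ε ((0:ℤ), (0:ℤ))) t, Set.mem_iUnion.mpr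
      ⟨⟨⟨((0:ℤ), (0:ℤ)), ⟨le_refl 0, by omega, le_refl 0, by omega⟩⟩, rfl⟩, ⟨t, ht, rfl⟩⟩⟩
  have hBne : B.Nonempty := by
    obtain ⟨t, ht⟩ := Tdiag_nonempty hp ε
    refine ⟨fmap p (dig ε ((1:ℤ), (0:ℤ))) t, Set.mem_iUnion.mpr
      ⟨⟨⟨((1:ℤ), (0:ℤ)), mem_idx10 hp⟩, one_ne_zero⟩, ⟨t, ht, rfl⟩⟩⟩
  have hdisj : Disjoint A B := by
    rw [Set.disjoint_left]
    intro z hzA hzB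
    obtain ⟨qd, hzd⟩ := Set.mem_iUnion.mp hzA
    obtain ⟨qo, hzo⟩ := Set.mem_iUnion.mp hzB
    obtain ⟨x, hx, hfx⟩ := hzd
    obtain ⟨y, hy, hfy⟩ := hzo
    obtain ⟨⟨⟨a1, a2⟩, hmd⟩, hdiag⟩ := qd
    obtain ⟨⟨⟨c1, c2⟩, hmo⟩, hoff⟩ := qo
    simp only at hdiag hoff
    subst hdiag
    have heq : dig ε (a1, a1) + x = dig ε (c1, c2) + y := by
      have h1 : fmap p (dig ε (a1, a1)) x = fmap p (dig ε (c1, c2)) y := by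
        rw [hfx, hfy]
      unfold fmap at h1
      have hp0' : ((p:ℝ))⁻¹ ≠ 0 := inv_ne_zero (hp0 hp)
      exact smul_right_injective _ hp0' h1
    have hdiff : dig ε (a1, a1) - dig ε (c1, c2) = y - x :=
      sub_eq_sub_iff_add_eq_add.mpr (by rw [heq, add_comm])
    have hmemdiff : dig ε (a1, a1) - dig ε (c1, c2) ∈ Tdiff p ε :=
      ⟨y, hy, x, hx, hdiff⟩
    rw [dig_sub_diagoff hoff] at hmemdiff
    obtain ⟨d1, d2, d3, d4⟩ := hmd
    obtain ⟨e1, e2, e3, e4⟩ := hmo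
    exact no_edge hp hε d1 d2 e1 e2 e3 e4 hoff hmemdiff
  -- separation contradiction
  obtain ⟨U, V, hUo, hVo, hAU, hBV, hUV⟩ :=
    SeparatedNhds.of_isCompact_isCompact hAcomp hBcomp hdisj
  obtain ⟨a, ha⟩ := hAne
  obtain ⟨b, hb⟩ := hBne
  obtain ⟨z, _, hzU, hzV⟩ := hconn.isPreconnected U V hUo hVo
    (hTsub.trans (Set.union_subset_union hAU hBV))
    ⟨a, hAsubT ha, hAU ha⟩ ⟨b, hBsubT hb, hBV hb⟩
  exact Set.disjoint_left.mp hUV hzU hzV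




end Stmt17

/-- `T_ε` is connected if and only if `|ε| ≤ (|p| - 1)² / (|p| - 2)`. -/
theorem stmt17 (p : ℤ) (hp : 2 < |p|) (ε : ℝ) :
    IsConnected (Tdiag p ε) ↔ |ε| ≤ (|(p : ℝ)| - 1) ^ 2 / (|(p : ℝ)| - 2) := by
  constructor
  · intro hconn
    by_contra hgt
    push_neg at hgt
    exact Stmt17.disconnected_of_large hp hgt hconn
  · intro hε
    have hreach := Stmt17.reach_all hp (Stmt17.bridge hp hε)
    have hK := Stmt17.isConnected_Kset hp hreach
    have h := Stmt17.isConnected_iInter_of_antitone (Stmt17.isCompact_Kset hp ε) hK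
      (Stmt17.Kset_antitone hp ε)
    rwa [Stmt17.iInter_Kset hp ε] at h
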